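/- arXiv:1607.02101 — 8 statements merged into one kernel-verified Lean document; each statement's English description precedes it below -/
import Mathlib

section
/- Let w be a Schwarz function with Taylor expansion w(z) = w₁z + w₂z² + ⋯, and let t be a real number. Then |w₂ − t·w₁²| ≤ −t if t < −1, |w₂ − t·w₁²| ≤ 1 if −1 ≤ t ≤ 1, and |w₂ − t·w₁²| ≤ t if t > 1. -/
open Metric Set

-- Möbius inequality
lemma mobius_lt (a u : ℂ) (ha : ‖a‖ < 1) (hu : ‖u‖ < 1) :
    ‖u - a‖ < ‖1 - (starRingEnd ℂ) a * u‖ := by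
  have key : Complex.normSq (1 - (starRingEnd ℂ) a * u) - Complex.normSq (u - a) =
      (1 - Complex.normSq a) * (1 - Complex.normSq u) := by
    simp [Complex.normSq_apply, Complex.sub_re, Complex.sub_im, Complex.mul_re, Complex.mul_im]
    ring
  have ha2 : Complex.normSq a < 1 := by
    have := Complex.sq_norm a ▸ (by nlinarith [norm_nonneg a] : (‖a‖)^2 < 1)
    linarith [this]
  have hu2 : Complex.normSq u < 1 := by
    have := Complex.sq_norm u ▸ (by nlinarith [norm_nonneg u] : (‖u‖)^2 < 1)
    linarith [this]
  have h2 : Complex.normSq (u - a) < Complex.normSq (1 - (starRingEnd ℂ) a * u) := by nlinarith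
  have := Real.sqrt_lt_sqrt (Complex.normSq_nonneg _) h2
  simpa [Complex.norm_def] using this

lemma schur_bound (w : ℂ → ℂ)
    (hw : AnalyticOnNhd ℂ w (Metric.ball (0 : ℂ) 1))
    (hw0 : w 0 = 0)
    (hwb : ∀ z ∈ Metric.ball (0 : ℂ) 1, ‖w z‖ < 1) :
    ‖deriv w 0‖ ≤ 1 ∧
      ‖iteratedDeriv 2 w 0 / 2‖ ≤ 1 - (‖deriv w 0‖)^2 := by
  have h0mem : (0 : ℂ) ∈ ball (0 : ℂ) 1 := by simp
  obtain ⟨p, hp⟩ := hw 0 h0mem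
  set g : ℂ → ℂ := dslope w 0 with hgdef
  have hg : HasFPowerSeriesAt g p.fslope 0 := hp.has_fpower_series_dslope_fslope
  have hg0 : g 0 = deriv w 0 := dslope_same w 0
  have hdg : deriv g 0 = p.coeff 2 := by
    have : deriv g 0 = p.fslope.coeff 1 := hg.deriv
    rwa [p.coeff_fslope] at this
  -- w2 = p.coeff 2
  obtain ⟨r, hpr⟩ := hp
  have hco : iteratedDeriv 2 w 0 / 2 = p.coeff 2 := by
    have h1 := hpr.factorial_smul (1 : ℂ) 2
    rw [iteratedDeriv_eq_iteratedFDeriv, ← h1]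
    show ((Nat.factorial 2) • p.coeff 2) / 2 = p.coeff 2
    simp [Nat.factorial, smul_eq_mul]
  -- differentiability of g
  have hwd : DifferentiableOn ℂ w (ball (0:ℂ) 1) := fun z hz => (hw z hz).differentiableAt.differentiableWithinAt
  have hgd : DifferentiableOn ℂ g (ball (0:ℂ) 1) :=
    (Complex.differentiableOn_dslope (ball_mem_nhds _ one_pos)).mpr hwd
  -- bound ‖g‖ ≤ 1
  have hmaps : MapsTo w (ball (0:ℂ) 1) (ball (w 0) 1) := by
    intro z hz
    simp only [hw0, mem_ball, dist_zero_right]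
    exact hwb z hz
  have hgb : ∀ z ∈ ball (0:ℂ) 1, ‖g z‖ ≤ 1 := by
    intro z hz
    have := Complex.norm_dslope_le_div_of_mapsTo_ball hwd (hmaps.mono_right ball_subset_closedBall) hz
    simpa using this
  have hw1le : ‖deriv w 0‖ ≤ 1 := by
    have := hgb 0 h0mem
    rwa [hg0] at this
  refine ⟨hw1le, ?_⟩
  rw [hco, ← hdg]
  by_cases hstrict : ∀ z ∈ ball (0:ℂ) 1, ‖g z‖ < 1
  · -- Schwarz-Pick via Möbius
    set a : ℂ := g 0 with hadef
    have ha : ‖a‖ < 1 := hstrict 0 h0mem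
    set c : ℂ := 1 - (starRingEnd ℂ) a * a with hcdef
    have hcre : c = ((1 - Complex.normSq a : ℝ) : ℂ) := by
      simp [hcdef, Complex.normSq_eq_conj_mul_self]
    have hnormsq : Complex.normSq a < 1 := by
      have h := Complex.sq_norm a
      nlinarith [norm_nonneg a]
    have hcne : c ≠ 0 := by
      rw [hcre]
      simp only [ne_eq, Complex.ofReal_eq_zero]
      linarith
    set h : ℂ → ℂ := fun z => (g z - a) / (1 - (starRingEnd ℂ) a * g z) with hhdef
    have hdenom : ∀ z ∈ ball (0:ℂ) 1, (1 - (starRingEnd ℂ) a * g z) ≠ 0 := by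
      intro z hz
      have habs : ‖(starRingEnd ℂ) a * g z‖ < 1 := by
        rw [norm_mul, Complex.norm_conj]
        nlinarith [norm_nonneg a, norm_nonneg (g z), hstrict z hz, ha]
      intro hc0
      have heq : (starRingEnd ℂ) a * g z = 1 := by linear_combination -hc0
      rw [heq] at habs
      simp at habs
    have hhd : DifferentiableOn ℂ h (ball (0:ℂ) 1) := by
      apply DifferentiableOn.div
      · exact hgd.sub_const a
      · exact (differentiableOn_const 1).sub ((differentiableOn_const _).mul hgd)
      · exact hdenom
    have hh0 : h 0 = 0 := by simp [hhdef, ← hadef]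
    have hhb : ∀ z ∈ ball (0:ℂ) 1, ‖h z‖ < 1 := by
      intro z hz
      have hne := hdenom z hz
      rw [hhdef]
      simp only [norm_div]
      rw [div_lt_one (norm_pos_iff.mpr hne)]
      exact mobius_lt a (g z) ha (hstrict z hz)
    have hhmaps : MapsTo h (ball (0:ℂ) 1) (ball (h 0) 1) := by
      intro z hz
      simp only [hh0, mem_ball, dist_zero_right]
      exact hhb z hz
    have hhderiv : ‖deriv h 0‖ ≤ 1 := by
      have := Complex.norm_dslope_le_div_of_mapsTo_ball hhd (hhmaps.mono_right ball_subset_closedBall) h0mem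
      rw [dslope_same] at this
      simpa using this
    -- compute deriv h 0 = deriv g 0 / c
    have hgda : HasDerivAt g (deriv g 0) 0 := hg.hasDerivAt.congr_deriv hg.deriv.symm
    have hu : HasDerivAt (fun z => g z - a) (deriv g 0) 0 := hgda.sub_const a
    have hv : HasDerivAt (fun z => 1 - (starRingEnd ℂ) a * g z)
        (-((starRingEnd ℂ) a * deriv g 0)) 0 := by
      simpa using ((hgda.const_mul ((starRingEnd ℂ) a)).const_sub 1)
    have hv0 : (1 - (starRingEnd ℂ) a * g 0) = c := by rw [hcdef, ← hadef]
    have hhda : HasDerivAt h ((deriv g 0 * (1 - (starRingEnd ℂ) a * g 0) -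
        (g 0 - a) * (-((starRingEnd ℂ) a * deriv g 0))) / (1 - (starRingEnd ℂ) a * g 0)^2) 0 :=
      hu.div hv (hdenom 0 h0mem)
    have hd0 : deriv h 0 = deriv g 0 / c := by
      rw [hhda.deriv, hv0]
      field_simp
      ring
    rw [hd0] at hhderiv
    rw [norm_div, div_le_one (by simpa using (norm_pos_iff.mpr hcne))] at hhderiv
    have hcabs : ‖c‖ = 1 - Complex.normSq a := by
      rw [hcre]
      rw [Complex.norm_real, Real.norm_eq_abs, abs_of_nonneg (by linarith)]
    rw [hcabs] at hhderiv
    have heq2 : Complex.normSq a = (‖deriv w 0‖)^2 := by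
      rw [← Complex.sq_norm, hg0]
    rw [heq2] at hhderiv
    exact hhderiv
  · -- max modulus: g is constant
    push_neg at hstrict
    obtain ⟨z₀, hz₀, hz₀1⟩ := hstrict
    have heq1 : ‖g z₀‖ = 1 := le_antisymm (hgb z₀ hz₀) hz₀1
    have hmax : IsMaxOn (norm ∘ g) (ball (0:ℂ) 1) z₀ := by
      intro z hz
      simp only [Function.comp_apply]
      rw [heq1]
      exact hgb z hz
    have heqon : EqOn g (Function.const ℂ (g z₀)) (ball (0:ℂ) 1) :=
      Complex.eqOn_of_isPreconnected_of_isMaxOn_norm (convex_ball _ _).isPreconnected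
        isOpen_ball hgd hz₀ hmax
    have hev : g =ᶠ[nhds (0:ℂ)] Function.const ℂ (g z₀) :=
      heqon.eventuallyEq_of_mem (isOpen_ball.mem_nhds h0mem)
    have hderiv0 : deriv g 0 = 0 := by
      rw [hev.deriv_eq]
      exact deriv_const 0 (g z₀)
    have hg01 : ‖g 0‖ = 1 := by
      rw [heqon h0mem]
      exact heq1
    rw [hderiv0, norm_zero, ← hg0]
    nlinarith [hg01]

theorem schwarz_coeff_bound_real
    (w : ℂ → ℂ)
    (hw : AnalyticOnNhd ℂ w (Metric.ball (0 : ℂ) 1))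
    (hw0 : w 0 = 0)
    (hwb : ∀ z ∈ Metric.ball (0 : ℂ) 1, ‖w z‖ < 1)
    (w1 w2 : ℂ)
    (hw1 : w1 = deriv w 0)
    (hw2 : w2 = iteratedDeriv 2 w 0 / 2)
    (t : ℝ) :
    (t < -1 → ‖w2 - (t : ℂ) * w1 ^ 2‖ ≤ -t) ∧
    (-1 ≤ t ∧ t ≤ 1 → ‖w2 - (t : ℂ) * w1 ^ 2‖ ≤ 1) ∧
    (1 < t → ‖w2 - (t : ℂ) * w1 ^ 2‖ ≤ t) := by
  obtain ⟨hA, hB⟩ := schur_bound w hw hw0 hwb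
  rw [← hw1] at hA
  rw [← hw2, ← hw1] at hB
  have htri : ‖w2 - (t : ℂ) * w1 ^ 2‖ ≤
      ‖w2‖ + |t| * (‖w1‖)^2 := by
    calc ‖w2 - (t : ℂ) * w1 ^ 2‖
        ≤ ‖w2‖ + ‖(t : ℂ) * w1 ^ 2‖ := by
          have := norm_sub_le w2 ((t:ℂ) * w1 ^ 2)
          simpa using this
      _ = ‖w2‖ + |t| * (‖w1‖)^2 := by
          rw [norm_mul, norm_pow, Complex.norm_real, Real.norm_eq_abs]
  have hA2 : (‖w1‖)^2 ≤ 1 := by nlinarith [norm_nonneg w1]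
  have hAnn : 0 ≤ (‖w1‖)^2 := by positivity
  refine ⟨fun ht => ?_, fun ht => ?_, fun ht => ?_⟩
  · have : |t| = -t := abs_of_neg (by linarith)
    rw [this] at htri
    nlinarith
  · have : |t| ≤ 1 := abs_le.mpr ⟨ht.1, ht.2⟩
    nlinarith [abs_nonneg t]
  · have : |t| = t := abs_of_pos (by linarith)
    rw [this] at htri
    nlinarith
end

section
/- Let w be a Schwarz function with Taylor expansion w(z) = w₁z + w₂z² + ⋯, and let t be a real number with −1 < t ≤ 0. Then |w₂ − t·w₁²| + (1 + t)·|w₁|² ≤ 1. -/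
open Metric Set Complex

lemma moebius_abs_le {a ζ : ℂ} (ha : ‖a‖ ≤ 1) (hz : ‖ζ‖ ≤ 1) :
    ‖ζ - a‖ ≤ ‖1 - (starRingEnd ℂ) a * ζ‖ := by
  have hid : Complex.normSq (1 - (starRingEnd ℂ) a * ζ) - Complex.normSq (ζ - a)
      = (1 - Complex.normSq a) * (1 - Complex.normSq ζ) := by
    simp only [Complex.normSq_apply, Complex.sub_re, Complex.sub_im, Complex.mul_re,
      Complex.mul_im, Complex.conj_re, Complex.conj_im, Complex.one_re, Complex.one_im]
    ring
  have h1 : Complex.normSq a ≤ 1 := by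
    rw [← Complex.sq_norm]; nlinarith [norm_nonneg a]
  have h2 : Complex.normSq ζ ≤ 1 := by
    rw [← Complex.sq_norm]; nlinarith [norm_nonneg ζ]
  rw [Complex.norm_def, Complex.norm_def]
  exact Real.sqrt_le_sqrt (by nlinarith)

theorem schwarz_coeff_bound_improved_nonpos
    (w : ℂ → ℂ)
    (hw : AnalyticOnNhd ℂ w (Metric.ball (0 : ℂ) 1))
    (hw0 : w 0 = 0)
    (hwb : ∀ z ∈ Metric.ball (0 : ℂ) 1, ‖w z‖ < 1)
    (w1 w2 : ℂ)
    (hw1 : w1 = deriv w 0)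
    (hw2 : w2 = iteratedDeriv 2 w 0 / 2)
    (t : ℝ) (ht1 : -1 < t) (ht2 : t ≤ 0) :
    ‖w2 - (t : ℂ) * w1 ^ 2‖ + (1 + t) * ‖w1‖ ^ 2 ≤ 1 := by
  have hball : (0:ℂ) ∈ Metric.ball (0:ℂ) 1 := by simp
  obtain ⟨p, hp⟩ := hw 0 hball
  set g := dslope w 0 with hgdef
  have hg : HasFPowerSeriesAt g p.fslope 0 := hp.has_fpower_series_dslope_fslope
  have hgan : AnalyticAt ℂ g 0 := hg.analyticAt
  have hg0 : g 0 = w1 := by rw [hgdef, dslope_same, ← hw1]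
  have hweq : w = fun z => z * g z := by
    funext z
    rcases eq_or_ne z 0 with rfl | hz
    · simp [hw0]
    · rw [hgdef, dslope_of_ne _ hz]
      simp only [slope_def_field, hw0, sub_zero]; field_simp
  have hgon : AnalyticOnNhd ℂ g {z | AnalyticAt ℂ g z} := fun z hz => hz
  have hdg_an : AnalyticAt ℂ (deriv g) 0 := hgon.deriv 0 hgan
  have hderiv_w : ∀ᶠ z in nhds (0:ℂ), deriv w z = g z + z * deriv g z := by
    filter_upwards [hgan.eventually_analyticAt] with z hz
    rw [hweq]
    have h1 : HasDerivAt (fun y => y * g y) (1 * g z + z * deriv g z) z :=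
      (hasDerivAt_id z).mul hz.differentiableAt.hasDerivAt
    rw [h1.deriv]; ring
  have hw2' : w2 = deriv g 0 := by
    have h2 : iteratedDeriv 2 w 0 = deriv (deriv w) 0 := by
      rw [iteratedDeriv_succ, iteratedDeriv_one]
    have h3 : deriv (deriv w) 0 = deriv (fun z => g z + z * deriv g z) 0 :=
      Filter.EventuallyEq.deriv_eq hderiv_w
    have h4 : HasDerivAt (fun z : ℂ => g z + z * deriv g z)
        (deriv g 0 + (1 * deriv g 0 + 0 * deriv (deriv g) 0)) 0 :=
      hgan.differentiableAt.hasDerivAt.add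
        ((hasDerivAt_id 0).mul hdg_an.differentiableAt.hasDerivAt)
    rw [hw2, h2, h3, h4.deriv]; ring
  have hdw : DifferentiableOn ℂ w (ball 0 1) := hw.differentiableOn
  have hmaps : MapsTo w (ball (0:ℂ) 1) (ball (w 0) 1) := by
    intro z hz; rw [hw0, mem_ball_zero_iff]; exact hwb z hz
  have hgb : ∀ z ∈ ball (0:ℂ) 1, ‖g z‖ ≤ 1 := fun z hz => by
    simpa using Complex.norm_dslope_le_div_of_mapsTo_ball hdw (hmaps.mono_right ball_subset_closedBall) hz
  have hgd : DifferentiableOn ℂ g (ball 0 1) :=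
    (differentiableOn_dslope (ball_mem_nhds _ one_pos)).mpr hdw
  have habs1 : ‖w1‖ ≤ 1 := by rw [← hg0]; exact hgb 0 hball
  have key : ‖deriv g 0‖ ≤ 1 - ‖w1‖^2 := by
    rcases eq_or_lt_of_le habs1 with heq | hlt
    · have hmax : IsMaxOn (norm ∘ g) (ball (0:ℂ) 1) 0 := by
        intro z hz
        simp only [Function.comp_apply, Set.mem_setOf_eq, hg0, heq]
        exact hgb z hz
      have hconst := Complex.eqOn_of_isPreconnected_of_isMaxOn_norm
        (convex_ball (0:ℂ) 1).isPreconnected isOpen_ball hgd hball hmax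
      have hev : g =ᶠ[nhds (0:ℂ)] Function.const ℂ (g 0) :=
        hconst.eventuallyEq_of_mem (isOpen_ball.mem_nhds hball)
      rw [hev.deriv_eq]
      have hdc : deriv (Function.const ℂ (g 0)) 0 = 0 := deriv_const 0 (g 0)
      rw [hdc]
      simp [heq]
    · set a := w1 with hadef
      have hden : ∀ z ∈ ball (0:ℂ) 1, (1 - (starRingEnd ℂ) a * g z) ≠ 0 := by
        intro z hz h0
        have h1 : ‖(starRingEnd ℂ) a * g z‖ = 1 := by
          have h2 : (starRingEnd ℂ) a * g z = 1 := by linear_combination -h0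
          rw [h2]; simp
        rw [norm_mul, Complex.norm_conj] at h1
        nlinarith [hgb z hz, norm_nonneg (g z), norm_nonneg a]
      set h := fun z => (g z - a) / (1 - (starRingEnd ℂ) a * g z) with hhdef
      have hh0 : h 0 = 0 := by rw [hhdef]; simp [hg0]
      have hhd : DifferentiableOn ℂ h (ball 0 1) :=
        (hgd.sub_const a).div ((differentiableOn_const 1).sub
          ((differentiableOn_const _).mul hgd)) hden
      have hhb : ∀ z ∈ ball (0:ℂ) 1, ‖h z‖ ≤ 1 := by
        intro z hz
        rw [hhdef]
        simp only [norm_div]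
        rw [div_le_one (norm_pos_iff.mpr (hden z hz))]
        exact moebius_abs_le habs1 (hgb z hz)
      have hDa : (1:ℂ) - (starRingEnd ℂ) a * a = ((1 - ‖a‖^2 : ℝ) : ℂ) := by
        rw [mul_comm, Complex.mul_conj, ← Complex.sq_norm]
        push_cast; ring
      have hgd0 : HasDerivAt g (deriv g 0) 0 := hgan.differentiableAt.hasDerivAt
      have hN : HasDerivAt (fun z => g z - a) (deriv g 0) 0 := hgd0.sub_const a
      have hD : HasDerivAt (fun z => 1 - (starRingEnd ℂ) a * g z)
          (-((starRingEnd ℂ) a * deriv g 0)) 0 := (hgd0.const_mul _).const_sub 1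
      have hden0 := hden 0 hball
      rw [hg0] at hden0
      have hH : HasDerivAt h ((deriv g 0 * (1 - (starRingEnd ℂ) a * g 0) -
          (g 0 - a) * -((starRingEnd ℂ) a * deriv g 0)) / (1 - (starRingEnd ℂ) a * g 0)^2) 0 := by
        rw [hhdef]
        exact hN.div hD (by rw [hg0]; exact hden0)
      have hderh : deriv h 0 = deriv g 0 / (1 - (starRingEnd ℂ) a * a) := by
        rw [hH.deriv, hg0]
        field_simp
        ring
      have hle : ∀ ε : ℝ, 0 < ε → ‖deriv h 0‖ ≤ 1 + ε := by
        intro ε hε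
        have hmapsh : MapsTo h (ball (0:ℂ) 1) (ball (h 0) (1+ε)) := by
          intro z hz
          rw [hh0, mem_ball_zero_iff]
          exact lt_of_le_of_lt (hhb z hz) (by linarith)
        simpa using Complex.norm_deriv_le_div_of_mapsTo_ball hhd (hmapsh.mono_right ball_subset_closedBall) one_pos
      have hlim : ‖deriv h 0‖ ≤ 1 := by
        by_contra hc
        push_neg at hc
        have := hle ((‖deriv h 0‖ - 1)/2) (by linarith)
        linarith
      have hpos : (0:ℝ) < 1 - ‖a‖^2 := by
        nlinarith [norm_nonneg a]
      have h1 : ‖deriv h 0‖ = ‖deriv g 0‖ / (1 - ‖a‖^2) := by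
        rw [hderh, norm_div, hDa, Complex.norm_real, Real.norm_eq_abs, abs_of_pos hpos]
      rw [h1, div_le_one hpos] at hlim
      exact hlim
  have habs2 : ‖w2‖ ≤ 1 - ‖w1‖^2 := hw2' ▸ key
  have htri : ‖w2 - (t:ℂ) * w1 ^ 2‖
      ≤ ‖w2‖ + (-t) * ‖w1‖^2 := by
    rw [sub_eq_add_neg]
    refine (norm_add_le _ _).trans ?_
    rw [norm_neg, norm_mul, norm_pow, Complex.norm_real, Real.norm_eq_abs, abs_of_nonpos ht2]
  nlinarith [norm_nonneg w1]
end

section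
/- Let w be a Schwarz function with Taylor expansion w(z) = w₁z + w₂z² + ⋯, and let t be a real number with 0 < t < 1. Then |w₂ − t·w₁²| + (1 − t)·|w₁|² ≤ 1. -/
open Metric Set

lemma normSq_mobius_id (a b : ℂ) :
    Complex.normSq (1 - (starRingEnd ℂ) a * b) - Complex.normSq (b - a)
      = (1 - Complex.normSq a) * (1 - Complex.normSq b) := by
  simp only [Complex.normSq_apply, Complex.sub_re, Complex.sub_im, Complex.mul_re,
    Complex.mul_im, Complex.one_re, Complex.one_im, Complex.conj_re, Complex.conj_im]
  ring

lemma schwarz_pick_zero (g : ℂ → ℂ) (hgd : DifferentiableOn ℂ g (ball 0 1))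
    (hb : ∀ z ∈ ball (0:ℂ) 1, ‖g z‖ < 1) :
    ‖deriv g 0‖ ≤ 1 - ‖g 0‖ ^ 2 := by
  set a : ℂ := g 0 with ha_def
  have h0 : (0:ℂ) ∈ ball (0:ℂ) 1 := mem_ball_self one_pos
  have ha : ‖a‖ < 1 := hb 0 h0
  have hden : ∀ z ∈ ball (0:ℂ) 1, 1 - (starRingEnd ℂ) a * g z ≠ 0 := by
    intro z hz h
    have h1 : ‖(starRingEnd ℂ) a * g z‖ < 1 := by
      rw [norm_mul, Complex.norm_conj]
      calc ‖a‖ * ‖g z‖ ≤ ‖a‖ * 1 :=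
            mul_le_mul_of_nonneg_left (hb z hz).le (norm_nonneg a)
        _ < 1 := by simpa using ha
    have : (starRingEnd ℂ) a * g z = 1 := by linear_combination -h
    rw [this] at h1; simp at h1
  set h : ℂ → ℂ := fun z => (g z - a) / (1 - (starRingEnd ℂ) a * g z) with hh
  have hhd : DifferentiableOn ℂ h (ball 0 1) := by
    apply DifferentiableOn.div
    · exact hgd.sub (differentiableOn_const a)
    · exact (differentiableOn_const 1).sub ((differentiableOn_const _).mul hgd)
    · exact hden
  have hlt : ∀ z ∈ ball (0:ℂ) 1,
      ‖g z - a‖ < ‖1 - (starRingEnd ℂ) a * g z‖ := by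
    intro z hz
    have h1 : Complex.normSq (g z - a) < Complex.normSq (1 - (starRingEnd ℂ) a * g z) := by
      have := normSq_mobius_id a (g z)
      have ha2 : Complex.normSq a < 1 := by
        rw [← Complex.sq_norm]; nlinarith [norm_nonneg a]
      have hb2 : Complex.normSq (g z) < 1 := by
        rw [← Complex.sq_norm]; nlinarith [norm_nonneg (g z), hb z hz]
      nlinarith
    have := (Complex.sq_norm (g z - a)) ▸ (Complex.sq_norm (1 - (starRingEnd ℂ) a * g z)) ▸ h1
    exact lt_of_pow_lt_pow_left₀ 2 (norm_nonneg _) this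
  have hh0 : h 0 = 0 := by simp [hh, ← ha_def]
  have hmaps : MapsTo h (ball 0 1) (ball (h 0) 1) := by
    rw [hh0]
    intro z hz
    rw [mem_ball_zero_iff]
    have hd0 : ‖1 - (starRingEnd ℂ) a * g z‖ > 0 :=
      norm_pos_iff.mpr (hden z hz)
    simpa [hh, norm_div] using (div_lt_one hd0).2 (hlt z hz)
  have hschwarz : ‖deriv h 0‖ ≤ 1 :=
    le_of_le_of_eq (Complex.norm_deriv_le_div_of_mapsTo_ball hhd (hmaps.mono_right ball_subset_closedBall) one_pos) (by norm_num)
  -- compute deriv h 0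
  have hga : HasDerivAt g (deriv g 0) 0 :=
    (hgd.differentiableAt (ball_mem_nhds _ one_pos)).hasDerivAt
  have hd0 : (1 : ℂ) - (starRingEnd ℂ) a * a ≠ 0 := by
    have := hden 0 h0; rwa [← ha_def] at this
  have hdh : HasDerivAt h (deriv g 0 / (1 - (starRingEnd ℂ) a * a)) 0 := by
    have hnum : HasDerivAt (fun z => g z - a) (deriv g 0) 0 := hga.sub_const a
    have hden' : HasDerivAt (fun z => 1 - (starRingEnd ℂ) a * g z)
        (-((starRingEnd ℂ) a * deriv g 0)) 0 :=
      (hga.const_mul ((starRingEnd ℂ) a)).const_sub 1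
    have := hnum.div hden' (by simpa [← ha_def] using hd0)
    refine this.congr_deriv ?_
    rw [← ha_def]
    field_simp
    ring
  rw [hdh.deriv] at hschwarz
  rw [norm_div] at hschwarz
  have habs : ‖1 - (starRingEnd ℂ) a * a‖ = 1 - ‖a‖ ^ 2 := by
    have : (starRingEnd ℂ) a * a = (Complex.normSq a : ℂ) := by
      rw [mul_comm, Complex.mul_conj]
    rw [this, ← Complex.ofReal_one, ← Complex.ofReal_sub, Complex.norm_real, Real.norm_eq_abs,
      abs_of_nonneg, Complex.sq_norm]
    rw [← Complex.sq_norm]; nlinarith [norm_nonneg a]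
  rw [habs] at hschwarz
  have hpos : 0 < 1 - ‖a‖ ^ 2 := by nlinarith [norm_nonneg a]
  exact (div_le_one hpos).1 hschwarz

theorem schwarz_coeff_bound_improved_pos
    (w : ℂ → ℂ)
    (hw : AnalyticOnNhd ℂ w (Metric.ball (0 : ℂ) 1))
    (hw0 : w 0 = 0)
    (hwb : ∀ z ∈ Metric.ball (0 : ℂ) 1, ‖w z‖ < 1)
    (w1 w2 : ℂ)
    (hw1 : w1 = deriv w 0)
    (hw2 : w2 = iteratedDeriv 2 w 0 / 2)
    (t : ℝ) (ht1 : 0 < t) (ht2 : t < 1) :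
    ‖w2 - (t : ℂ) * w1 ^ 2‖ + (1 - t) * ‖w1‖ ^ 2 ≤ 1 := by
  have h0 : (0:ℂ) ∈ ball (0:ℂ) 1 := mem_ball_self one_pos
  have hwd : DifferentiableOn ℂ w (ball 0 1) := hw.differentiableOn
  have hmaps : MapsTo w (ball 0 1) (ball (w 0) 1) := by
    rw [hw0]; intro z hz; rw [mem_ball_zero_iff]; exact hwb z hz
  set g : ℂ → ℂ := dslope w 0 with hg_def
  have hgd : DifferentiableOn ℂ g (ball 0 1) :=
    (Complex.differentiableOn_dslope (ball_mem_nhds _ one_pos)).mpr hwd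
  have hgle : ∀ z ∈ ball (0:ℂ) 1, ‖g z‖ ≤ 1 := by
    intro z hz
    have := Complex.norm_dslope_le_div_of_mapsTo_ball hwd (hmaps.mono_right ball_subset_closedBall) hz
    simpa using this
  have hg0 : g 0 = w1 := by rw [hg_def, dslope_same, hw1]
  -- power series facts
  obtain ⟨p, hp⟩ := hw 0 h0
  have hderiv_g : deriv g 0 = w2 := by
    have hfs : HasFPowerSeriesAt g p.fslope 0 := hp.has_fpower_series_dslope_fslope
    have h1 : deriv g 0 = p.fslope.coeff 1 := hfs.deriv
    obtain ⟨r, hpr⟩ := hp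
    have h2 := hpr.factorial_smul (1 : ℂ) 2
    have h3 : iteratedDeriv 2 w 0 = iteratedFDeriv ℂ 2 w 0 (fun _ => 1) :=
      iteratedDeriv_eq_iteratedFDeriv ..
    have h4 : (Nat.factorial 2) • p 2 (fun _ => 1) = iteratedDeriv 2 w 0 := by rw [h3]; exact h2
    have h5 : p.coeff 2 = p 2 (fun _ => 1) := rfl
    rw [h1, FormalMultilinearSeries.coeff_fslope, hw2, ← h4, h5]
    norm_num
  by_cases hc : ∀ z ∈ ball (0:ℂ) 1, ‖g z‖ < 1
  · have key := schwarz_pick_zero g hgd hc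
    rw [hderiv_g, hg0] at key
    have htri : ‖w2 - (t:ℂ) * w1 ^ 2‖ ≤ ‖w2‖ + t * ‖w1‖ ^ 2 := by
      calc ‖w2 - (t:ℂ) * w1 ^ 2‖ ≤ ‖w2‖ + ‖(t:ℂ) * w1 ^ 2‖ :=
            (norm_sub_le _ _).trans_eq (by ring_nf)
        _ = ‖w2‖ + t * ‖w1‖ ^ 2 := by
            rw [norm_mul, norm_pow, Complex.norm_real, Real.norm_eq_abs, abs_of_pos ht1]
    nlinarith [norm_nonneg w1]
  · push_neg at hc
    obtain ⟨z₀, hz₀, hz₀1⟩ := hc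
    have heq1 : ‖g z₀‖ = 1 := le_antisymm (hgle z₀ hz₀) hz₀1
    have hmax : IsMaxOn (norm ∘ g) (ball 0 1) z₀ := by
      intro z hz
      simp only [Function.comp_apply, Set.mem_setOf_eq]
      rw [heq1]
      exact hgle z hz
    have hconst : EqOn g (fun _ => g z₀) (ball 0 1) :=
      fun z hz => Complex.eqOn_of_isPreconnected_of_isMaxOn_norm
        (convex_ball 0 1).isPreconnected isOpen_ball hgd hz₀ hmax hz
    have hw1abs : ‖w1‖ = 1 := by
      rw [← hg0, hconst h0, heq1]
    have hw2z : w2 = 0 := by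
      rw [← hderiv_g]
      have hev : g =ᶠ[nhds 0] fun _ => g z₀ :=
        Filter.eventuallyEq_of_mem (isOpen_ball.mem_nhds h0) hconst
      rw [hev.deriv_eq, deriv_const]
    rw [hw2z, hw1abs]
    have : ‖0 - (t:ℂ) * w1 ^ 2‖ = t := by
      rw [zero_sub, norm_neg, norm_mul, norm_pow, Complex.norm_real, Real.norm_eq_abs, abs_of_pos ht1,
        hw1abs]
      ring
    rw [this]; ring_nf; norm_num
end

section
/- There exist r > 0 and an analytic function g on {z ∈ ℂ : |z| < r} such that g(z) = z·D_qF(z)/F(z) for all 0 < |z| < r, and g has Taylor expansion g(z) = 1 − (([2]_q − 1)/3)·a₂·z + ((([3]_q − 1)/10)·a₃ − (([2]_q − 1)/9)·a₂²)·z² + O(z³); that is, g(0) = 1, g′(0) = −(([2]_q − 1)/3)·a₂ and g″(0)/2 = (([3]_q − 1)/10)·a₃ − (([2]_q − 1)/9)·a₂². -/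
open FormalMultilinearSeries Filter
open scoped ENNReal NNReal

lemma tesq_itder (c : ℕ → ℂ) (h : 0 < (ofScalars ℂ c).radius) (n : ℕ) :
    iteratedDeriv n ((ofScalars ℂ c).sum) 0 = (n.factorial : ℂ) * c n := by
  have H := (ofScalars ℂ c).hasFPowerSeriesOnBall h
  have h2 := H.factorial_smul (1 : ℂ) n
  rw [ofScalars_apply_eq] at h2
  rw [iteratedDeriv_eq_iteratedFDeriv, ← h2]
  simp [nsmul_eq_mul]

lemma tesq_radius (c : ℕ → ℂ) (C : ℝ) (hC : ∀ n, ‖c n‖ * (1/2 : ℝ)^n ≤ C) :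
    (1/2 : ℝ≥0∞) ≤ (ofScalars ℂ c).radius := by
  have h := (ofScalars ℂ c).le_radius_of_bound C (r := (1/2 : ℝ≥0)) (fun n => by
    rw [ofScalars_norm]
    simpa using hC n)
  refine le_trans (le_of_eq ?_) h
  simp

lemma tesq_mem {z : ℂ} (hz : ‖z‖ < 1/2) {R : ℝ≥0∞} (hR : (1/2 : ℝ≥0∞) ≤ R) :
    z ∈ Metric.eball (0:ℂ) R := by
  rw [mem_emetric_ball_zero_iff]
  refine lt_of_lt_of_le ?_ hR
  have h1 : ‖z‖₊ < (1/2 : ℝ≥0) := by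
    rw [← NNReal.coe_lt_coe]
    simpa using hz
  calc (‖z‖₊ : ℝ≥0∞) < ((1/2 : ℝ≥0) : ℝ≥0∞) := by exact_mod_cast h1
    _ = (1/2 : ℝ≥0∞) := by simp

theorem taylor_expansion_starlike_quotient
    (q : ℝ) (hq0 : 0 < q) (hq1 : q < 1)
    (a : ℕ → ℂ) (ha0 : a 0 = 0) (ha1 : a 1 = 1)
    (f F DqF : ℂ → ℂ)
    (hf : ∀ z ∈ Metric.ball (0 : ℂ) 1, HasSum (fun n : ℕ => a n * z ^ n) (f z))
    (hF : ∀ z ∈ Metric.ball (0 : ℂ) 1,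
      HasSum (fun n : ℕ =>
        (-1 : ℂ) ^ (n - 1) * a n / (((2 * n - 1 : ℕ) : ℂ) * ((n - 1).factorial : ℂ)) * z ^ n)
        (F z))
    (hDq0 : DqF 0 = 1)
    (hDqF : ∀ z : ℂ, z ≠ 0 → DqF z = (F z - F ((q : ℂ) * z)) / ((1 - (q : ℂ)) * z))
    (ϑ2 ϑ3 : ℝ)
    (hϑ2 : ϑ2 = (1 - q ^ 2) / (1 - q) - 1)
    (hϑ3 : ϑ3 = (1 - q ^ 3) / (1 - q) - 1)
    :
    ∃ r : ℝ, 0 < r ∧ ∃ g : ℂ → ℂ,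
      AnalyticOnNhd ℂ g (Metric.ball (0 : ℂ) r) ∧
      (∀ z : ℂ, z ≠ 0 → ‖z‖ < r → g z = z * DqF z / F z) ∧
      g 0 = 1 ∧
      deriv g 0 = -((ϑ2 : ℂ) / 3) * a 2 ∧
      iteratedDeriv 2 g 0 / 2 = ((ϑ3 : ℂ) / 10) * a 3 - ((ϑ2 : ℂ) / 9) * (a 2) ^ 2 := by
  have hq1R : (1:ℝ) - q ≠ 0 := by linarith
  have hq1C : (1:ℂ) - (q:ℂ) ≠ 0 := by
    simpa using Complex.ofReal_ne_zero.mpr hq1R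
  -- coefficients
  set b : ℕ → ℂ := fun n =>
    (-1 : ℂ) ^ (n - 1) * a n / (((2 * n - 1 : ℕ) : ℂ) * ((n - 1).factorial : ℂ)) with hb
  have hb0 : b 0 = 0 := by simp [hb, ha0]
  have hb1 : b 1 = 1 := by simp [hb, ha1]
  set c : ℕ → ℂ := fun n => b (n + 1) with hc
  set γ : ℕ → ℂ := fun n => b (n + 1) * (((1 - q ^ (n+1)) / (1 - q) : ℝ) : ℂ) with hγ
  have hc0 : c 0 = 1 := by simp [hc, hb1]
  have hγ0 : γ 0 = 1 := by
    simp only [hγ, hb1, zero_add, pow_one, one_mul]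
    rw [div_self hq1R]
    simp
  have hc1 : c 1 = -a 2 / 3 := by
    rw [hc, hb]
    norm_num [Nat.factorial]
  have hc2 : c 2 = a 3 / 10 := by
    rw [hc, hb]
    norm_num [Nat.factorial]
  have hγ1 : γ 1 = c 1 * (((1 - q ^ 2) / (1 - q) : ℝ) : ℂ) := by
    rw [hγ, hc]
  have hγ2 : γ 2 = c 2 * (((1 - q ^ 3) / (1 - q) : ℝ) : ℂ) := by
    rw [hγ, hc]
  clear_value c γ
  -- membership lemmas
  have hmem1 : ∀ z : ℂ, ‖z‖ < 1/2 → z ∈ Metric.ball (0:ℂ) 1 := by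
    intro z hz
    simp only [Metric.mem_ball, dist_zero_right]
    linarith
  -- bound on coefficients
  have hhalf : (1/2 : ℂ) ∈ Metric.ball (0:ℂ) 1 := by
    simp only [Metric.mem_ball, dist_zero_right]
    rw [show (1/2 : ℂ) = ((1/2 : ℝ) : ℂ) by norm_num, Complex.norm_real]
    rw [Real.norm_eq_abs, abs_of_nonneg (by norm_num : (0:ℝ) ≤ 1/2)]
    norm_num
  have hsumhalf : HasSum (fun n => b n * (1/2 : ℂ) ^ n) (F (1/2)) := hF _ hhalf
  obtain ⟨C, hC⟩ : ∃ C : ℝ, ∀ n, ‖b n‖ * (1/2 : ℝ)^n ≤ C := by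
    have h1 := hsumhalf.summable.tendsto_atTop_zero
    have h2 : Tendsto (fun n => ‖b n * (1/2 : ℂ) ^ n‖) atTop (nhds 0) := by
      simpa using h1.norm
    obtain ⟨C, hC⟩ := h2.bddAbove_range
    refine ⟨C, fun n => ?_⟩
    have := hC (Set.mem_range_self n)
    simpa [norm_mul, norm_pow] using this
  have hCnn : (0:ℝ) ≤ C := le_trans (by positivity) (hC 0)
  have hcbound : ∀ n, ‖c n‖ * (1/2 : ℝ)^n ≤ 2 * C := by
    intro n
    have h1 := hC (n + 1)
    have h2 : ‖b (n+1)‖ * (1/2 : ℝ)^n = 2 * (‖b (n+1)‖ * (1/2 : ℝ)^(n+1)) := by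
      ring
    rw [hc]
    simp only []
    rw [h2]
    linarith
  have hrc : (1/2 : ℝ≥0∞) ≤ (ofScalars ℂ c).radius := tesq_radius c (2 * C) hcbound
  have hfrac : ∀ n : ℕ, ‖(((1 - q ^ (n+1)) / (1 - q) : ℝ) : ℂ)‖ ≤ 1 / (1 - q) := by
    intro n
    have hqpow : 0 ≤ q ^ (n+1) := by positivity
    have hqpow1 : q ^ (n+1) ≤ 1 := pow_le_one₀ (le_of_lt hq0) (le_of_lt hq1)
    rw [Complex.norm_real, Real.norm_eq_abs,
      abs_of_nonneg (div_nonneg (by linarith) (by linarith))]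
    gcongr
    · linarith
  have hrγ : (1/2 : ℝ≥0∞) ≤ (ofScalars ℂ γ).radius := by
    apply tesq_radius γ (2 * C / (1 - q))
    intro n
    have h1 : ‖γ n‖ = ‖c n‖ * ‖(((1 - q ^ (n+1)) / (1 - q) : ℝ) : ℂ)‖ := by
      simp only [hγ, hc]
      exact norm_mul _ _
    rw [h1]
    have h2 := hcbound n
    have h3 := hfrac n
    have h4 : (0:ℝ) < 1 - q := by linarith
    have h5 : (0:ℝ) ≤ ‖c n‖ * (1/2 : ℝ)^n := by positivity
    calc ‖c n‖ * ‖(((1 - q ^ (n+1)) / (1 - q) : ℝ) : ℂ)‖ * (1/2:ℝ)^n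
        = (‖c n‖ * (1/2:ℝ)^n) * ‖(((1 - q ^ (n+1)) / (1 - q) : ℝ) : ℂ)‖ := by ring
      _ ≤ (2 * C) * (1 / (1 - q)) := by
          apply mul_le_mul h2 h3 (norm_nonneg _) (by linarith)
      _ = 2 * C / (1 - q) := by ring
  -- the two power series
  have hposc : (0:ℝ≥0∞) < (ofScalars ℂ c).radius := lt_of_lt_of_le (by norm_num) hrc
  have hposγ : (0:ℝ≥0∞) < (ofScalars ℂ γ).radius := lt_of_lt_of_le (by norm_num) hrγ
  set k₁ : ℂ → ℂ := (ofScalars ℂ c).sum with hk₁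
  set h₁ : ℂ → ℂ := (ofScalars ℂ γ).sum with hh₁
  have HK := (ofScalars ℂ c).hasFPowerSeriesOnBall hposc
  have HH := (ofScalars ℂ γ).hasFPowerSeriesOnBall hposγ
  -- values and derivatives at 0
  have hk10 : k₁ 0 = 1 := by
    have h := tesq_itder c hposc 0
    rw [iteratedDeriv_zero] at h
    simpa [hc0] using h
  have hh10 : h₁ 0 = 1 := by
    have h := tesq_itder γ hposγ 0
    rw [iteratedDeriv_zero] at h
    simpa [hγ0] using h
  have hk1d : deriv k₁ 0 = c 1 := by
    have h := tesq_itder c hposc 1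
    rw [iteratedDeriv_one] at h
    simpa using h
  have hh1d : deriv h₁ 0 = γ 1 := by
    have h := tesq_itder γ hposγ 1
    rw [iteratedDeriv_one] at h
    simpa using h
  have hk1d2 : iteratedDeriv 2 k₁ 0 = 2 * c 2 := by
    have h := tesq_itder c hposc 2
    norm_num at h
    exact h
  have hh1d2 : iteratedDeriv 2 h₁ 0 = 2 * γ 2 := by
    have h := tesq_itder γ hposγ 2
    norm_num at h
    exact h
  -- analyticity on the half ball
  have habs : ∀ x ∈ Metric.ball (0:ℂ) (1/2 : ℝ), ‖x‖ < 1/2 := by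
    intro x hx
    simpa [Metric.mem_ball, dist_zero_right] using hx
  have hanK : AnalyticOnNhd ℂ k₁ (Metric.ball (0:ℂ) (1/2 : ℝ)) := by
    intro x hx
    exact HK.analyticOnNhd x (tesq_mem (habs x hx) hrc)
  have hanH : AnalyticOnNhd ℂ h₁ (Metric.ball (0:ℂ) (1/2 : ℝ)) := by
    intro x hx
    exact HH.analyticOnNhd x (tesq_mem (habs x hx) hrγ)
  -- nonvanishing of k₁ near 0
  have h0mem : (0:ℂ) ∈ Metric.ball (0:ℂ) (1/2 : ℝ) := by
    simp only [Metric.mem_ball, dist_self]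
    norm_num
  have hne : ∀ᶠ z in nhds (0:ℂ), k₁ z ≠ 0 :=
    (hanK 0 h0mem).continuousAt.eventually_ne (by rw [hk10]; exact one_ne_zero)
  obtain ⟨ε, hε0, hε⟩ := Metric.eventually_nhds_iff_ball.mp hne
  set r : ℝ := min ε (1/2) with hrdef
  have hr0 : 0 < r := lt_min hε0 (by norm_num)
  have hrhalf : r ≤ 1/2 := min_le_right _ _
  have hrε : r ≤ ε := min_le_left _ _
  have hsubhalf : Metric.ball (0:ℂ) r ⊆ Metric.ball (0:ℂ) (1/2 : ℝ) :=
    Metric.ball_subset_ball hrhalf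
  have hkne : ∀ z ∈ Metric.ball (0:ℂ) r, k₁ z ≠ 0 := by
    intro z hz
    exact hε z (Metric.ball_subset_ball hrε hz)
  -- sum identities
  have hksum : ∀ z : ℂ, z ≠ 0 → ‖z‖ < 1/2 → k₁ z = F z / z := by
    intro z hz0 hz
    have S1 : HasSum (fun n => b n * z ^ n) (F z) := hF z (hmem1 z hz)
    have S1' : HasSum (fun n => b (n+1) * z^(n+1)) (F z) := by
      have h := (hasSum_nat_add_iff' (f := fun n => b n * z ^ n) 1).mpr S1
      simpa [hb0] using h
    have S2 : HasSum (fun n => c n * z ^ n) (F z / z) := by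
      have h := S1'.div_const z
      rw [show (fun n => c n * z ^ n) = (fun n => b (n+1) * z^(n+1) / z) from ?_]
      · exact h
      funext n
      rw [hc]
      field_simp [pow_succ]
      ring
    have Sk : HasSum (fun n => c n * z ^ n) (k₁ z) := by
      have h := (ofScalars ℂ c).hasSum (tesq_mem hz hrc)
      rw [show (fun n => c n * z ^ n) = (fun n => ofScalars ℂ c n (fun _ => z)) from ?_]
      · exact h
      funext n
      rw [ofScalars_apply_eq, smul_eq_mul]
    exact Sk.unique S2
  have hhsum : ∀ z : ℂ, z ≠ 0 → ‖z‖ < 1/2 →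
      h₁ z = (F z - F ((q:ℂ) * z)) / ((1 - (q:ℂ)) * z) := by
    intro z hz0 hz
    have hqz : ‖(q:ℂ) * z‖ < 1/2 := by
      rw [norm_mul, Complex.norm_real, Real.norm_eq_abs, abs_of_pos hq0]
      nlinarith [norm_nonneg z]
    have S1 : HasSum (fun n => b n * z ^ n) (F z) := hF z (hmem1 z hz)
    have S2 : HasSum (fun n => b n * ((q:ℂ) * z) ^ n) (F ((q:ℂ) * z)) :=
      hF _ (hmem1 _ hqz)
    have S3 : HasSum (fun n => (b n * z ^ n - b n * ((q:ℂ) * z) ^ n) / ((1 - (q:ℂ)) * z))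
        ((F z - F ((q:ℂ) * z)) / ((1 - (q:ℂ)) * z)) := (S1.sub S2).div_const _
    have S3' : HasSum (fun n =>
        (b (n+1) * z ^ (n+1) - b (n+1) * ((q:ℂ) * z) ^ (n+1)) / ((1 - (q:ℂ)) * z))
        ((F z - F ((q:ℂ) * z)) / ((1 - (q:ℂ)) * z)) := by
      have h := (hasSum_nat_add_iff'
        (f := fun n => (b n * z ^ n - b n * ((q:ℂ) * z) ^ n) / ((1 - (q:ℂ)) * z)) 1).mpr S3
      simpa using h
    have S4 : HasSum (fun n => γ n * z ^ n)
        ((F z - F ((q:ℂ) * z)) / ((1 - (q:ℂ)) * z)) := by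
      convert S3' using 1
      funext n
      rw [hγ]
      push_cast
      field_simp [pow_succ, mul_pow]
      ring
    have Sh : HasSum (fun n => γ n * z ^ n) (h₁ z) := by
      have h := (ofScalars ℂ γ).hasSum (tesq_mem hz hrγ)
      rw [show (fun n => γ n * z ^ n) = (fun n => ofScalars ℂ γ n (fun _ => z)) from ?_]
      · exact h
      funext n
      rw [ofScalars_apply_eq, smul_eq_mul]
    exact Sh.unique S4
  -- the function g
  set g : ℂ → ℂ := fun z => h₁ z / k₁ z with hg
  have hanG : AnalyticOnNhd ℂ g (Metric.ball (0:ℂ) r) :=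
    (hanH.mono hsubhalf).div (hanK.mono hsubhalf) hkne
  have h0r : (0:ℂ) ∈ Metric.ball (0:ℂ) r := by
    simp only [Metric.mem_ball, dist_self]
    exact hr0
  have hg0 : g 0 = 1 := by rw [hg]; simp only [hh10, hk10]; norm_num
  have hopen : IsOpen (Metric.ball (0:ℂ) r) := Metric.isOpen_ball
  have hevball : ∀ z ∈ Metric.ball (0:ℂ) r, h₁ z = g z * k₁ z := by
    intro z hz
    rw [hg]
    field_simp [hkne z hz]
  have hev : h₁ =ᶠ[nhds 0] (fun z => g z * k₁ z) :=
    Filter.eventually_of_mem (hopen.mem_nhds h0r) hevball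
  have hd1 : γ 1 = deriv g 0 * k₁ 0 + g 0 * deriv k₁ 0 := by
    rw [← hh1d, hev.deriv_eq]
    exact deriv_mul ((hanG 0 h0r).differentiableAt) (((hanK.mono hsubhalf) 0 h0r).differentiableAt)
  have hdg : deriv g 0 = γ 1 - c 1 := by
    rw [hd1, hk10, hg0, hk1d]; ring
  -- second derivative
  have hev2 : ∀ z ∈ Metric.ball (0:ℂ) r, deriv h₁ z = deriv g z * k₁ z + g z * deriv k₁ z := by
    intro z hz
    have hev' : h₁ =ᶠ[nhds z] (fun w => g w * k₁ w) :=
      Filter.eventually_of_mem (hopen.mem_nhds hz) hevball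
    rw [hev'.deriv_eq]
    exact deriv_mul ((hanG z hz).differentiableAt) (((hanK.mono hsubhalf) z hz).differentiableAt)
  have hev2' : deriv h₁ =ᶠ[nhds 0] (fun z => deriv g z * k₁ z + g z * deriv k₁ z) :=
    Filter.eventually_of_mem (hopen.mem_nhds h0r) hev2
  have hanG' : AnalyticOnNhd ℂ (deriv g) (Metric.ball (0:ℂ) r) := hanG.deriv
  have hanK' : AnalyticOnNhd ℂ (deriv k₁) (Metric.ball (0:ℂ) r) := (hanK.mono hsubhalf).deriv
  have hd2L : iteratedDeriv 2 h₁ 0 =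
      deriv (fun z => deriv g z * k₁ z + g z * deriv k₁ z) 0 := by
    rw [show (2:ℕ) = 1 + 1 from rfl, iteratedDeriv_succ, iteratedDeriv_one]
    exact hev2'.deriv_eq
  have hd2R : deriv (fun z => deriv g z * k₁ z + g z * deriv k₁ z) 0 =
      (deriv (deriv g) 0 * k₁ 0 + deriv g 0 * deriv k₁ 0)
      + (deriv g 0 * deriv k₁ 0 + g 0 * deriv (deriv k₁) 0) := by
    have d1 : DifferentiableAt ℂ (fun z => deriv g z * k₁ z) 0 :=
      ((hanG' 0 h0r).mul ((hanK.mono hsubhalf) 0 h0r)).differentiableAt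
    have d2 : DifferentiableAt ℂ (fun z => g z * deriv k₁ z) 0 :=
      ((hanG 0 h0r).mul (hanK' 0 h0r)).differentiableAt
    rw [deriv_fun_add d1 d2,
      deriv_fun_mul (hanG' 0 h0r).differentiableAt (((hanK.mono hsubhalf) 0 h0r)).differentiableAt,
      deriv_fun_mul (hanG 0 h0r).differentiableAt (hanK' 0 h0r).differentiableAt]
  have hddg : deriv (deriv g) 0 = iteratedDeriv 2 g 0 := by
    rw [show (2:ℕ) = 1 + 1 from rfl, iteratedDeriv_succ, iteratedDeriv_one]
  have hddk : deriv (deriv k₁) 0 = 2 * c 2 := by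
    rw [← hk1d2, show (2:ℕ) = 1 + 1 from rfl, iteratedDeriv_succ, iteratedDeriv_one]
  have hD2 : iteratedDeriv 2 g 0 = 2 * γ 2 - 2 * c 2 - 2 * (c 1) * (γ 1 - c 1) := by
    have h := hd2L.trans hd2R
    rw [hh1d2, hk10, hg0, hk1d, hddg, hddk, hdg] at h
    linear_combination -h
  have hϑ2C : (ϑ2 : ℂ) = (((1 - q ^ 2) / (1 - q) : ℝ) : ℂ) - 1 := by
    rw [hϑ2]; push_cast; ring
  have hϑ3C : (ϑ3 : ℂ) = (((1 - q ^ 3) / (1 - q) : ℝ) : ℂ) - 1 := by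
    rw [hϑ3]; push_cast; ring
  clear_value k₁ h₁ g
  refine ⟨r, hr0, g, hanG, ?_, hg0, ?_, ?_⟩
  · intro z hz0 hzr
    have hzh : ‖z‖ < 1/2 := lt_of_lt_of_le hzr hrhalf
    rw [hg]
    simp only [hhsum z hz0 hzh, hksum z hz0 hzh, hDqF z hz0]
    rw [div_div_eq_mul_div, mul_comm]
  · rw [hdg, hγ1, hc1, hϑ2C]
    ring
  · rw [hD2, hγ1, hγ2, hc1, hc2, hϑ2C, hϑ3C]
    ring
end

section
/- Under the stated spirallike-starlike subordination hypothesis, writing ϑ₂ = [2]_q − 1 and ϑ₃ = [3]_q − 1, the Taylor coefficients of f satisfy a₂ = −3·b·p₁·w₁/(ϱ·ϑ₂) and a₃ = (10·b/(ϱ·ϑ₃))·(p₁·w₂ + p₂·w₁² + b·p₁²·w₁²/(ϱ·ϑ₂)). -/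
open Filter Topology

private lemma memball_of_emetric {y : ℂ} (hy : y ∈ Metric.eball (0:ℂ) 1) :
    y ∈ Metric.ball (0:ℂ) 1 := by
  simp only [Metric.mem_eball, edist_zero_right] at hy
  simp only [Metric.mem_ball, dist_zero_right]
  rw [enorm_eq_nnnorm] at hy
  exact_mod_cast hy

private lemma hasFPS_of_hasSum {g : ℂ → ℂ} {c : ℕ → ℂ}
    (hg : ∀ z ∈ Metric.ball (0 : ℂ) 1, HasSum (fun n => c n * z ^ n) (g z)) :
    HasFPowerSeriesOnBall g (FormalMultilinearSeries.ofScalars ℂ c) 0 1 := by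
  constructor
  · refine ENNReal.le_of_forall_nnreal_lt fun r hr => ?_
    have hrlt : (r : ℝ) < 1 := by exact_mod_cast hr
    have hmem : ((r : ℝ) : ℂ) ∈ Metric.ball (0:ℂ) 1 := by
      simp only [Metric.mem_ball, dist_zero_right, Complex.norm_real, Real.norm_eq_abs]
      rwa [abs_of_nonneg r.coe_nonneg]
    have hsum := (hg _ hmem).summable
    have hb : BddAbove (Set.range fun n => ‖c n * ((r:ℝ):ℂ) ^ n‖) :=
      (hsum.tendsto_atTop_zero.norm.bddAbove_range)
    obtain ⟨C, hC⟩ := hb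
    refine FormalMultilinearSeries.le_radius_of_bound _ C fun n => ?_
    have h1 : ‖(FormalMultilinearSeries.ofScalars ℂ c) n‖ * (r:ℝ)^n = ‖c n * ((r:ℝ):ℂ) ^ n‖ := by
      rw [FormalMultilinearSeries.ofScalars_norm, norm_mul, norm_pow, Complex.norm_real,
        Real.norm_eq_abs, abs_of_nonneg r.coe_nonneg]
    rw [h1]
    exact hC ⟨n, rfl⟩
  · exact one_pos
  · intro y hy
    have hy' := memball_of_emetric hy
    have := hg y hy'
    simp only [zero_add]
    convert this using 2 with n
    · rfl
    rw [FormalMultilinearSeries.ofScalars_apply_eq, smul_eq_mul]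

private lemma iteratedDeriv_of_hasSum {g : ℂ → ℂ} {c : ℕ → ℂ}
    (hg : ∀ z ∈ Metric.ball (0 : ℂ) 1, HasSum (fun n => c n * z ^ n) (g z)) (n : ℕ) :
    iteratedDeriv n g 0 = (n.factorial : ℂ) * c n := by
  have h := hasFPS_of_hasSum hg
  have h2 := h.factorial_smul (1:ℂ) n
  rw [iteratedDeriv_eq_iteratedFDeriv, ← h2]
  rw [FormalMultilinearSeries.ofScalars_apply_eq, smul_eq_mul, one_pow, mul_one, nsmul_eq_mul]

private lemma analyticOnNhd_of_hasSum {g : ℂ → ℂ} {c : ℕ → ℂ}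
    (hg : ∀ z ∈ Metric.ball (0 : ℂ) 1, HasSum (fun n => c n * z ^ n) (g z)) :
    AnalyticOnNhd ℂ g (Metric.ball (0:ℂ) 1) := by
  intro z hz
  refine (hasFPS_of_hasSum hg).analyticAt_of_mem ?_
  simp only [Metric.mem_ball, dist_zero_right] at hz
  simp only [Metric.mem_eball, edist_zero_right]
  rw [enorm_eq_nnnorm]
  exact_mod_cast hz

private noncomputable def Cf (a : ℕ → ℂ) : ℕ → ℂ := fun n =>
  (-1 : ℂ) ^ (n - 1) * a n / (((2 * n - 1 : ℕ) : ℂ) * ((n - 1).factorial : ℂ))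

private lemma iterderiv23_eq {f : ℂ → ℂ} :
    iteratedDeriv 2 f 0 = deriv (deriv f) 0 ∧ iteratedDeriv 3 f 0 = deriv (deriv (deriv f)) 0 := by
  constructor
  · rw [show (2:ℕ) = 1 + 1 from rfl, iteratedDeriv_succ, iteratedDeriv_one]
  · rw [show (3:ℕ) = 2 + 1 from rfl, iteratedDeriv_succ, show (2:ℕ) = 1 + 1 from rfl,
      iteratedDeriv_succ, iteratedDeriv_one]

private lemma iteratedDeriv_mul23 {u v : ℂ → ℂ}
    (hu : AnalyticOnNhd ℂ u (Metric.ball (0:ℂ) 1))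
    (hv : AnalyticOnNhd ℂ v (Metric.ball (0:ℂ) 1)) :
    iteratedDeriv 2 (fun z => u z * v z) 0 =
      iteratedDeriv 2 u 0 * v 0 + 2 * deriv u 0 * deriv v 0 + u 0 * iteratedDeriv 2 v 0 ∧
    iteratedDeriv 3 (fun z => u z * v z) 0 =
      iteratedDeriv 3 u 0 * v 0 + 3 * iteratedDeriv 2 u 0 * deriv v 0 +
        3 * deriv u 0 * iteratedDeriv 2 v 0 + u 0 * iteratedDeriv 3 v 0 := by
  have hBo : IsOpen (Metric.ball (0:ℂ) 1) := Metric.isOpen_ball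
  have h0 : (0:ℂ) ∈ Metric.ball (0:ℂ) 1 := Metric.mem_ball_self one_pos
  have hu1 := hu.deriv
  have hu2 := hu1.deriv
  have hv1 := hv.deriv
  have hv2 := hv1.deriv
  have congrD : ∀ {f1 f2 : ℂ → ℂ}, Set.EqOn f1 f2 (Metric.ball (0:ℂ) 1) →
      Set.EqOn (deriv f1) (deriv f2) (Metric.ball (0:ℂ) 1) := by
    intro f1 f2 hfg
    have := hfg.iteratedDeriv_of_isOpen hBo 1
    simpa [iteratedDeriv_one] using this
  have e1 : Set.EqOn (deriv (fun z => u z * v z))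
      (fun z => deriv u z * v z + u z * deriv v z) (Metric.ball (0:ℂ) 1) :=
    fun z hz => deriv_mul ((hu z hz).differentiableAt) ((hv z hz).differentiableAt)
  have e2 : Set.EqOn (deriv (fun z => deriv u z * v z + u z * deriv v z))
      (fun z => (deriv (deriv u) z * v z + deriv u z * deriv v z) +
        (deriv u z * deriv v z + u z * deriv (deriv v) z)) (Metric.ball (0:ℂ) 1) := by
    intro z hz
    rw [deriv_fun_add (f := fun z => deriv u z * v z) (g := fun z => u z * deriv v z)
        (((hu1 z hz).differentiableAt).mul ((hv z hz).differentiableAt))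
        (((hu z hz).differentiableAt).mul ((hv1 z hz).differentiableAt)),
      deriv_fun_mul ((hu1 z hz).differentiableAt) ((hv z hz).differentiableAt),
      deriv_fun_mul ((hu z hz).differentiableAt) ((hv1 z hz).differentiableAt)]
  have e2' : Set.EqOn (deriv (deriv (fun z => u z * v z)))
      (fun z => (deriv (deriv u) z * v z + deriv u z * deriv v z) +
        (deriv u z * deriv v z + u z * deriv (deriv v) z)) (Metric.ball (0:ℂ) 1) :=
    fun z hz => ((congrD e1) hz).trans (e2 hz)
  have e3' : Set.EqOn (deriv (deriv (deriv (fun z => u z * v z))))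
      (deriv (fun z => (deriv (deriv u) z * v z + deriv u z * deriv v z) +
        (deriv u z * deriv v z + u z * deriv (deriv v) z))) (Metric.ball (0:ℂ) 1) :=
    congrD e2'
  have e3 : deriv (fun z => (deriv (deriv u) z * v z + deriv u z * deriv v z) +
        (deriv u z * deriv v z + u z * deriv (deriv v) z)) 0 =
      (deriv (deriv (deriv u)) 0 * v 0 + deriv (deriv u) 0 * deriv v 0 +
        (deriv (deriv u) 0 * deriv v 0 + deriv u 0 * deriv (deriv v) 0)) +
      (deriv (deriv u) 0 * deriv v 0 + deriv u 0 * deriv (deriv v) 0 +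
        (deriv u 0 * deriv (deriv v) 0 + u 0 * deriv (deriv (deriv v)) 0)) := by
    rw [deriv_fun_add
        (f := fun z => deriv (deriv u) z * v z + deriv u z * deriv v z)
        (g := fun z => deriv u z * deriv v z + u z * deriv (deriv v) z)
        ((((hu2 0 h0).differentiableAt).mul ((hv 0 h0).differentiableAt)).add
          (((hu1 0 h0).differentiableAt).mul ((hv1 0 h0).differentiableAt)))
        ((((hu1 0 h0).differentiableAt).mul ((hv1 0 h0).differentiableAt)).add
          (((hu 0 h0).differentiableAt).mul ((hv2 0 h0).differentiableAt))),
      deriv_fun_add (f := fun z => deriv (deriv u) z * v z) (g := fun z => deriv u z * deriv v z)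
        (((hu2 0 h0).differentiableAt).mul ((hv 0 h0).differentiableAt))
        (((hu1 0 h0).differentiableAt).mul ((hv1 0 h0).differentiableAt)),
      deriv_fun_add (f := fun z => deriv u z * deriv v z) (g := fun z => u z * deriv (deriv v) z)
        (((hu1 0 h0).differentiableAt).mul ((hv1 0 h0).differentiableAt))
        (((hu 0 h0).differentiableAt).mul ((hv2 0 h0).differentiableAt)),
      deriv_fun_mul ((hu2 0 h0).differentiableAt) ((hv 0 h0).differentiableAt),
      deriv_fun_mul ((hu1 0 h0).differentiableAt) ((hv1 0 h0).differentiableAt),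
      deriv_fun_mul ((hu 0 h0).differentiableAt) ((hv2 0 h0).differentiableAt)]
  obtain ⟨i2, i3⟩ := iterderiv23_eq (f := fun z => u z * v z)
  obtain ⟨i2u, i3u⟩ := iterderiv23_eq (f := u)
  obtain ⟨i2v, i3v⟩ := iterderiv23_eq (f := v)
  constructor
  · rw [i2, i2u, i2v, e2' h0]; ring
  · rw [i3, i3u, i3v, i2u, i2v, e3' h0, e3]; ring

private lemma comp_derivs12 {P w : ℂ → ℂ}
    (hP : AnalyticOnNhd ℂ P (Metric.ball (0:ℂ) 1))
    (hw : AnalyticOnNhd ℂ w (Metric.ball (0:ℂ) 1))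
    (hmaps : Set.MapsTo w (Metric.ball (0:ℂ) 1) (Metric.ball (0:ℂ) 1)) :
    deriv (fun z => P (w z)) 0 = deriv P (w 0) * deriv w 0 ∧
    iteratedDeriv 2 (fun z => P (w z)) 0 =
      deriv (deriv P) (w 0) * deriv w 0 ^ 2 + deriv P (w 0) * deriv (deriv w) 0 := by
  have hBo : IsOpen (Metric.ball (0:ℂ) 1) := Metric.isOpen_ball
  have h0 : (0:ℂ) ∈ Metric.ball (0:ℂ) 1 := Metric.mem_ball_self one_pos
  have hP1 := hP.deriv
  have e1 : Set.EqOn (deriv (fun z => P (w z)))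
      (fun z => deriv P (w z) * deriv w z) (Metric.ball (0:ℂ) 1) := by
    intro z hz
    have hc : (fun z => P (w z)) = P ∘ w := rfl
    rw [hc]
    exact deriv_comp z ((hP _ (hmaps hz)).differentiableAt) ((hw z hz).differentiableAt)
  refine ⟨e1 h0, ?_⟩
  rw [(iterderiv23_eq (f := fun z => P (w z))).1]
  have hE : deriv (fun z => P (w z)) =ᶠ[𝓝 (0:ℂ)] fun z => deriv P (w z) * deriv w z :=
    Filter.eventuallyEq_of_mem (hBo.mem_nhds h0) e1
  rw [hE.deriv_eq]
  have hd1 : DifferentiableAt ℂ (fun z => deriv P (w z)) 0 := by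
    have hc : (fun z => deriv P (w z)) = deriv P ∘ w := rfl
    rw [hc]
    exact DifferentiableAt.comp 0 ((hP1 _ (hmaps h0)).differentiableAt)
      ((hw 0 h0).differentiableAt)
  have hd2 : DifferentiableAt ℂ (deriv w) 0 := (hw.deriv 0 h0).differentiableAt
  rw [deriv_fun_mul hd1 hd2]
  have hc2 : deriv (fun z => deriv P (w z)) 0 = deriv (deriv P) (w 0) * deriv w 0 := by
    have hc : (fun z => deriv P (w z)) = deriv P ∘ w := rfl
    rw [hc]
    exact deriv_comp 0 ((hP1 _ (hmaps h0)).differentiableAt) ((hw 0 h0).differentiableAt)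
  rw [hc2]
  ring

theorem starlike_coeff_formulas
    (q : ℝ) (hq0 : 0 < q) (hq1 : q < 1)
    (a : ℕ → ℂ) (ha0 : a 0 = 0) (ha1 : a 1 = 1)
    (f F DqF : ℂ → ℂ)
    (hf : ∀ z ∈ Metric.ball (0 : ℂ) 1, HasSum (fun n : ℕ => a n * z ^ n) (f z))
    (hF : ∀ z ∈ Metric.ball (0 : ℂ) 1,
      HasSum (fun n : ℕ =>
        (-1 : ℂ) ^ (n - 1) * a n / (((2 * n - 1 : ℕ) : ℂ) * ((n - 1).factorial : ℂ)) * z ^ n)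
        (F z))
    (hDq0 : DqF 0 = 1)
    (hDqF : ∀ z : ℂ, z ≠ 0 → DqF z = (F z - F ((q : ℂ) * z)) / ((1 - (q : ℂ)) * z))
    (ϑ2 ϑ3 : ℝ)
    (hϑ2 : ϑ2 = (1 - q ^ 2) / (1 - q) - 1)
    (hϑ3 : ϑ3 = (1 - q ^ 3) / (1 - q) - 1)
    (w : ℂ → ℂ)
    (hw : AnalyticOnNhd ℂ w (Metric.ball (0 : ℂ) 1))
    (hw0 : w 0 = 0)
    (hwb : ∀ z ∈ Metric.ball (0 : ℂ) 1, ‖w z‖ < 1)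
    (w1 w2 : ℂ) (hw1 : w1 = deriv w 0) (hw2 : w2 = iteratedDeriv 2 w 0 / 2)
    (β : ℝ) (hβ1 : -(Real.pi / 2) < β) (hβ2 : β < Real.pi / 2)
    (ϱ : ℂ) (hϱ : ϱ = 1 + Complex.I * (Real.tan β : ℂ))
    (b : ℂ) (hb : b ≠ 0)
    (p : ℂ → ℂ)
    (hp : AnalyticOnNhd ℂ p (Metric.ball (0 : ℂ) 1))
    (hp0 : p 0 = 1)
    (p1 p2 : ℂ) (hp1 : p1 = deriv p 0) (hp2 : p2 = iteratedDeriv 2 p 0 / 2)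
    (hFne : ∀ z ∈ Metric.ball (0 : ℂ) 1, z ≠ 0 → F z ≠ 0)
    (hsub : ∀ z ∈ Metric.ball (0 : ℂ) 1, z ≠ 0 →
      1 + (1 / b) * (ϱ * (z * DqF z / F z) - ϱ) = p (w z))
    :
    a 2 = -(3 * b * p1 * w1) / (ϱ * (ϑ2 : ℂ)) ∧
    a 3 = (10 * b / (ϱ * (ϑ3 : ℂ))) *
      (p1 * w2 + p2 * w1 ^ 2 + b * p1 ^ 2 * w1 ^ 2 / (ϱ * (ϑ2 : ℂ))) := by
  have hBo : IsOpen (Metric.ball (0:ℂ) 1) := Metric.isOpen_ball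
  have h0 : (0:ℂ) ∈ Metric.ball (0:ℂ) 1 := Metric.mem_ball_self one_pos
  -- basic nonzero facts
  have hq1r : (1:ℝ) - q ≠ 0 := sub_ne_zero.mpr (ne_of_gt (by linarith))
  have hq1c : (1:ℂ) - (q:ℂ) ≠ 0 := by
    have : ((1 - q : ℝ) : ℂ) ≠ 0 := Complex.ofReal_ne_zero.mpr hq1r
    simpa using this
  have hqc : (q:ℂ) ≠ 0 := Complex.ofReal_ne_zero.mpr (ne_of_gt hq0)
  have hϱ0 : ϱ ≠ 0 := by rw [hϱ]; simp [Complex.ext_iff]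
  have hϑ2q : ϑ2 = q := by rw [hϑ2]; field_simp; ring
  have hϑ3q : ϑ3 = q + q ^ 2 := by rw [hϑ3]; field_simp; ring
  -- coefficients of F
  have hFc : ∀ z ∈ Metric.ball (0:ℂ) 1, HasSum (fun n => Cf a n * z ^ n) (F z) := hF
  have hcoef := fun n => iteratedDeriv_of_hasSum hFc n
  have hc0 : Cf a 0 = 0 := by simp [Cf, ha0]
  have hc1 : Cf a 1 = 1 := by norm_num [Cf, ha1]
  have hc2 : Cf a 2 = -a 2 / 3 := by norm_num [Cf]
  have hc3 : Cf a 3 = a 3 / 10 := by norm_num [Cf, Nat.factorial]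
  have hF0 : F 0 = 0 := by
    have := hcoef 0
    simpa [hc0, iteratedDeriv_zero] using this
  have hdF0 : deriv F 0 = 1 := by
    have := hcoef 1
    simpa [hc1, iteratedDeriv_one] using this
  have hi2F : iteratedDeriv 2 F 0 = 2 * Cf a 2 := by
    have := hcoef 2
    norm_num [Nat.factorial] at this
    exact this
  have hFa : AnalyticOnNhd ℂ F (Metric.ball (0:ℂ) 1) := analyticOnNhd_of_hasSum hFc
  -- the composed function v = p ∘ w - 1
  have hmaps : Set.MapsTo w (Metric.ball (0:ℂ) 1) (Metric.ball (0:ℂ) 1) := by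
    intro z hz
    rw [mem_ball_zero_iff]
    simpa using hwb z hz
  have hPa : AnalyticOnNhd ℂ (fun z => p z - 1) (Metric.ball (0:ℂ) 1) :=
    hp.sub analyticOnNhd_const
  have hva : AnalyticOnNhd ℂ (fun z => p (w z) - 1) (Metric.ball (0:ℂ) 1) :=
    (hp.comp hw hmaps).sub analyticOnNhd_const
  have hdP : deriv (fun z => p z - 1) = deriv p := funext fun x => deriv_sub_const 1
  obtain ⟨hcd1, hcd2⟩ := comp_derivs12 hPa hw hmaps
  have hv0 : p (w 0) - 1 = 0 := by simp [hw0, hp0]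
  have hdw2 : deriv (deriv w) 0 = 2 * w2 := by
    rw [hw2, (iterderiv23_eq (f := w)).1]; ring
  have hdp2 : deriv (deriv p) 0 = 2 * p2 := by
    rw [hp2, (iterderiv23_eq (f := p)).1]; ring
  have hdv : deriv (fun z => p (w z) - 1) 0 = p1 * w1 := by
    rw [show (fun z => p (w z) - 1) = (fun z => (fun y => p y - 1) (w z)) from rfl, hcd1, hdP,
      hw0, hp1, hw1]
  have hi2v : iteratedDeriv 2 (fun z => p (w z) - 1) 0 = 2 * p2 * w1 ^ 2 + p1 * (2 * w2) := by
    rw [show (fun z => p (w z) - 1) = (fun z => (fun y => p y - 1) (w z)) from rfl, hcd2, hdP,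
      hw0, hdp2, hdw2, hp1, hw1]
  -- the left-hand side function L and its coefficients
  have hL : ∀ z ∈ Metric.ball (0:ℂ) 1,
      HasSum (fun n => ((ϱ/b) * ((Cf a n - Cf a n * (q:ℂ)^n) / (1 - (q:ℂ)) - Cf a n)) * z ^ n)
        ((fun z => (ϱ/b) * ((F z - F ((q:ℂ)*z)) / (1 - (q:ℂ)) - F z)) z) := by
    intro z hz
    have hz1 : ‖z‖ < 1 := mem_ball_zero_iff.mp hz
    have hqz : (q:ℂ) * z ∈ Metric.ball (0:ℂ) 1 := by
      rw [mem_ball_zero_iff, norm_mul, Complex.norm_real, Real.norm_eq_abs, abs_of_pos hq0]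
      nlinarith [norm_nonneg z]
    have h1 := hFc z hz
    have h2 := hFc _ hqz
    have h2' : HasSum (fun n => (Cf a n * (q:ℂ)^n) * z^n) (F ((q:ℂ)*z)) := by
      convert h2 using 2 with n
      rw [mul_pow]; ring
    have h3 := (((h1.sub h2').div_const (1 - (q:ℂ))).sub h1).mul_left (ϱ/b)
    convert h3 using 2 with n
    · rfl
    ring
  have hLcoef := fun n => iteratedDeriv_of_hasSum hL n
  -- the subordination identity on the ball
  have hEq : Set.EqOn (fun z => (ϱ/b) * ((F z - F ((q:ℂ)*z)) / (1 - (q:ℂ)) - F z))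
      (fun z => F z * (p (w z) - 1)) (Metric.ball (0:ℂ) 1) := by
    intro z hz
    by_cases hz0 : z = 0
    · subst hz0
      simp [hF0]
    · have hDq := hDqF z hz0
      have hs := hsub z hz hz0
      have hFz := hFne z hz hz0
      rw [hDq] at hs
      have hzD : z * ((F z - F ((q:ℂ)*z)) / ((1 - (q:ℂ)) * z)) =
          (F z - F ((q:ℂ)*z)) / (1 - (q:ℂ)) := by
        field_simp
      rw [hzD] at hs
      show (ϱ/b) * ((F z - F ((q:ℂ)*z)) / (1 - (q:ℂ)) - F z) = F z * (p (w z) - 1)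
      field_simp at hs ⊢
      linear_combination hs
  have hEv : (fun z => (ϱ/b) * ((F z - F ((q:ℂ)*z)) / (1 - (q:ℂ)) - F z)) =ᶠ[𝓝 (0:ℂ)]
      (fun z => F z * (p (w z) - 1)) := Filter.eventuallyEq_of_mem (hBo.mem_nhds h0) hEq
  obtain ⟨hm2, hm3⟩ := iteratedDeriv_mul23 hFa hva
  have hdiv2 : ∀ x : ℂ, (x - x*(q:ℂ)^2)/(1-(q:ℂ)) - x = x * (q:ℂ) := by
    intro x; field_simp; ring
  have hdiv3 : ∀ x : ℂ, (x - x*(q:ℂ)^3)/(1-(q:ℂ)) - x = x * ((q:ℂ) + (q:ℂ)^2) := by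
    intro x; field_simp; ring
  have eqn2 : ((Nat.factorial 2 : ℕ) : ℂ) * ((ϱ/b) * (Cf a 2 * (q:ℂ))) =
      iteratedDeriv 2 F 0 * 0 + 2 * deriv F 0 * (p1 * w1) +
        F 0 * iteratedDeriv 2 (fun z => p (w z) - 1) 0 := by
    rw [← hdiv2 (Cf a 2), ← hLcoef 2, hEv.iteratedDeriv_eq 2, hm2, hv0, hdv]
  have eqn3 : ((Nat.factorial 3 : ℕ) : ℂ) * ((ϱ/b) * (Cf a 3 * ((q:ℂ) + (q:ℂ)^2))) =
      iteratedDeriv 3 F 0 * 0 + 3 * iteratedDeriv 2 F 0 * (p1 * w1) +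
        3 * deriv F 0 * (2 * p2 * w1 ^ 2 + p1 * (2 * w2)) +
        F 0 * iteratedDeriv 3 (fun z => p (w z) - 1) 0 := by
    rw [← hdiv3 (Cf a 3), ← hLcoef 3, hEv.iteratedDeriv_eq 3, hm3, hv0, hdv, hi2v]
  rw [hF0, hdF0, hi2F, hc2] at eqn2 eqn3
  rw [hc3] at eqn3
  norm_num [Nat.factorial] at eqn2 eqn3
  -- clean polynomial forms
  have hϑ2c : ((ϑ2:ℝ):ℂ) = (q:ℂ) := by exact_mod_cast congrArg (Complex.ofReal) hϑ2q
  have hϑ3c : ((ϑ3:ℝ):ℂ) = (q:ℂ) + (q:ℂ)^2 := by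
    rw [hϑ3q]; push_cast; ring
  have hq3 : (q:ℂ) + (q:ℂ)^2 ≠ 0 := by
    intro hcon
    have h1 : ((q + q^2 : ℝ):ℂ) = 0 := by push_cast; linear_combination hcon
    have h2 := Complex.ofReal_eq_zero.mp h1
    nlinarith
  have E2 : ϱ * a 2 * (q:ℂ) = -3 * (b * (p1 * w1)) := by
    field_simp at eqn2
    linear_combination -eqn2
  have E3 : 3 * ϱ * a 3 * ((q:ℂ) + (q:ℂ)^2) =
      -10 * b * a 2 * (p1 * w1) + 30 * b * p2 * w1^2 + 30 * b * p1 * w2 := by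
    field_simp at eqn3
    linear_combination eqn3 / 2
  have ha2 : a 2 = -(3 * b * p1 * w1) / (ϱ * (ϑ2 : ℂ)) := by
    rw [hϑ2c, eq_div_iff (mul_ne_zero hϱ0 hqc)]
    linear_combination E2
  refine ⟨ha2, ?_⟩
  have key3 : a 3 * (ϱ*((q:ℂ)+(q:ℂ)^2)) * (ϱ*(q:ℂ)) =
      10*b*((p1*w2 + p2*w1^2)*(ϱ*(q:ℂ)) + b*p1^2*w1^2) := by
    linear_combination (ϱ*(q:ℂ)/3) * E3 - (10/3*b*p1*w1) * E2
  rw [hϑ3c, hϑ2c]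
  have h1q : (1:ℂ) + (q:ℂ) ≠ 0 := by
    intro h; apply hq3; linear_combination (q:ℂ) * h
  field_simp
  linear_combination key3
end

section
/- Under the stated spirallike-starlike subordination hypothesis, writing ϑ₂ = [2]_q − 1 and ϑ₃ = [3]_q − 1, for every complex number μ one has a₃ − μ·a₂² = (10·b/(ϱ·ϑ₃))·( p₁·w₂ + ( p₂ + b·p₁²·(10·ϑ₂ − 9·μ·ϑ₃)/(10·ϱ·ϑ₂²) )·w₁² ). -/
open Filter Set Topology

private lemma analyticAt_deriv' {f : ℂ → ℂ} {x : ℂ} (h : AnalyticAt ℂ f x) :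
    AnalyticAt ℂ (deriv f) x := by
  obtain ⟨u, hu_mem, hu⟩ := h.eventually_analyticAt.exists_mem
  exact AnalyticOnNhd.deriv (fun y hy => hu y hy) x (mem_of_mem_nhds hu_mem)

private lemma eqOn_deriv' {s : Set ℂ} (hs : IsOpen s) {g h : ℂ → ℂ} (H : Set.EqOn g h s) :
    Set.EqOn (deriv g) (deriv h) s := fun _ hz =>
  Filter.EventuallyEq.deriv_eq (Filter.eventuallyEq_of_mem (hs.mem_nhds hz) H)

private lemma itd2' (f : ℂ → ℂ) : iteratedDeriv 2 f = deriv (deriv f) := by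
  rw [iteratedDeriv_succ, iteratedDeriv_one]

private lemma itd3' (f : ℂ → ℂ) : iteratedDeriv 3 f = deriv (deriv (deriv f)) := by
  rw [iteratedDeriv_succ, itd2']

private lemma mul23 {u v : ℂ → ℂ} (hu : AnalyticAt ℂ u 0) (hv : AnalyticAt ℂ v 0) :
    deriv (fun z => u z * v z) 0 = deriv u 0 * v 0 + u 0 * deriv v 0 ∧
    deriv (deriv (fun z => u z * v z)) 0
      = deriv (deriv u) 0 * v 0 + 2 * (deriv u 0 * deriv v 0) + u 0 * deriv (deriv v) 0 ∧
    deriv (deriv (deriv (fun z => u z * v z))) 0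
      = deriv (deriv (deriv u)) 0 * v 0 + 3 * (deriv (deriv u) 0 * deriv v 0)
        + 3 * (deriv u 0 * deriv (deriv v) 0) + u 0 * deriv (deriv (deriv v)) 0 := by
  set s : Set ℂ := {z | AnalyticAt ℂ u z} ∩ {z | AnalyticAt ℂ v z} with hs_def
  have hs : IsOpen s := (isOpen_analyticAt ℂ u).inter (isOpen_analyticAt ℂ v)
  have h0 : (0:ℂ) ∈ s := ⟨hu, hv⟩
  have e1 : Set.EqOn (deriv (fun z => u z * v z))
      (fun z => deriv u z * v z + u z * deriv v z) s := fun z hz =>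
    deriv_mul hz.1.differentiableAt hz.2.differentiableAt
  have e2 : Set.EqOn (deriv (fun z => deriv u z * v z + u z * deriv v z))
      (fun z => deriv (deriv u) z * v z + 2 * (deriv u z * deriv v z)
        + u z * deriv (deriv v) z) s := by
    intro z hz
    have a1 : AnalyticAt ℂ u z := hz.1
    have a2 : AnalyticAt ℂ v z := hz.2
    have a1' := analyticAt_deriv' a1
    have a2' := analyticAt_deriv' a2
    rw [deriv_fun_add (f := fun z => deriv u z * v z) (g := fun z => u z * deriv v z)
        ((a1'.mul a2).differentiableAt) ((a1.mul a2').differentiableAt),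
      deriv_fun_mul a1'.differentiableAt a2.differentiableAt,
      deriv_fun_mul a1.differentiableAt a2'.differentiableAt]
    ring
  have E2 : Set.EqOn (deriv (deriv (fun z => u z * v z)))
      (fun z => deriv (deriv u) z * v z + 2 * (deriv u z * deriv v z)
        + u z * deriv (deriv v) z) s := fun z hz => (eqOn_deriv' hs e1 hz).trans (e2 hz)
  have a1 : AnalyticAt ℂ u 0 := hu
  have a2 : AnalyticAt ℂ v 0 := hv
  have a1' := analyticAt_deriv' a1
  have a2' := analyticAt_deriv' a2
  have a1'' := analyticAt_deriv' a1'
  have a2'' := analyticAt_deriv' a2'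
  have e3 : deriv (fun z => deriv (deriv u) z * v z + 2 * (deriv u z * deriv v z)
        + u z * deriv (deriv v) z) 0
      = deriv (deriv (deriv u)) 0 * v 0 + 3 * (deriv (deriv u) 0 * deriv v 0)
        + 3 * (deriv u 0 * deriv (deriv v) 0) + u 0 * deriv (deriv (deriv v)) 0 := by
    have dA : DifferentiableAt ℂ (fun z => deriv (deriv u) z * v z) 0 :=
      (a1''.mul a2).differentiableAt
    have dB : DifferentiableAt ℂ (fun z => 2 * (deriv u z * deriv v z)) 0 :=
      (analyticAt_const.mul (a1'.mul a2')).differentiableAt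
    have dAB : DifferentiableAt ℂ
        (fun z => deriv (deriv u) z * v z + 2 * (deriv u z * deriv v z)) 0 := dA.add dB
    have dC : DifferentiableAt ℂ (fun z => u z * deriv (deriv v) z) 0 :=
      (a1.mul a2'').differentiableAt
    rw [deriv_fun_add dAB dC,
      deriv_fun_add dA dB,
      deriv_fun_mul a1''.differentiableAt a2.differentiableAt,
      deriv_const_mul_field,
      deriv_fun_mul a1'.differentiableAt a2'.differentiableAt,
      deriv_fun_mul a1.differentiableAt a2''.differentiableAt]
    ring
  refine ⟨e1 h0, E2 h0, ?_⟩
  rw [(eqOn_deriv' hs E2) h0, e3]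

private lemma chain2 {p w : ℂ → ℂ} (hw : AnalyticAt ℂ w 0) (hp : AnalyticAt ℂ p (w 0)) :
    deriv (fun z => p (w z)) 0 = deriv p (w 0) * deriv w 0 ∧
    deriv (deriv (fun z => p (w z))) 0
      = deriv (deriv p) (w 0) * (deriv w 0) ^ 2 + deriv p (w 0) * deriv (deriv w) 0 := by
  set s : Set ℂ := {z | AnalyticAt ℂ w z ∧ AnalyticAt ℂ p (w z)} with hs_def
  have hs : IsOpen s := by
    rw [isOpen_iff_mem_nhds]
    rintro z ⟨hz1, hz2⟩
    have h1 : {z' | AnalyticAt ℂ w z'} ∈ 𝓝 z := (isOpen_analyticAt ℂ w).mem_nhds hz1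
    have h2 : {z' | AnalyticAt ℂ p (w z')} ∈ 𝓝 z :=
      hz1.continuousAt.preimage_mem_nhds ((isOpen_analyticAt ℂ p).mem_nhds hz2)
    exact Filter.inter_mem h1 h2
  have h0 : (0:ℂ) ∈ s := ⟨hw, hp⟩
  have e1 : Set.EqOn (deriv (fun z => p (w z)))
      (fun z => deriv p (w z) * deriv w z) s := by
    intro z hz
    have := deriv_comp z hz.2.differentiableAt hz.1.differentiableAt
    simpa [Function.comp_def] using this
  have e2 : deriv (fun z => deriv p (w z) * deriv w z) 0
      = deriv (deriv p) (w 0) * (deriv w 0) ^ 2 + deriv p (w 0) * deriv (deriv w) 0 := by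
    have hpw : AnalyticAt ℂ (fun z => deriv p (w z)) 0 := by
      have := (analyticAt_deriv' hp).comp hw
      simpa [Function.comp_def] using this
    have hw' := analyticAt_deriv' hw
    rw [deriv_fun_mul hpw.differentiableAt hw'.differentiableAt]
    have e3 : deriv (fun z => deriv p (w z)) 0 = deriv (deriv p) (w 0) * deriv w 0 := by
      have := deriv_comp 0 (analyticAt_deriv' hp).differentiableAt hw.differentiableAt
      simpa [Function.comp_def] using this
    rw [e3]; ring
  exact ⟨e1 h0, by rw [(eqOn_deriv' hs e1) h0, e2]⟩

private lemma scale3 {F : ℂ → ℂ} (hF : AnalyticAt ℂ F 0) (c : ℂ) :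
    deriv (fun z => F (c * z)) 0 = c * deriv F 0 ∧
    deriv (deriv (fun z => F (c * z))) 0 = c ^ 2 * deriv (deriv F) 0 ∧
    deriv (deriv (deriv (fun z => F (c * z)))) 0 = c ^ 3 * deriv (deriv (deriv F)) 0 := by
  set s : Set ℂ := (fun z => c * z) ⁻¹' {y | AnalyticAt ℂ F y} with hs_def
  have hs : IsOpen s := (isOpen_analyticAt ℂ F).preimage (continuous_const.mul continuous_id)
  have h0 : (0:ℂ) ∈ s := by
    show AnalyticAt ℂ F (c * 0)
    rwa [mul_zero]
  have hz' : ∀ z ∈ s, AnalyticAt ℂ F (c * z) := fun z hz => hz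
  have e1 : Set.EqOn (deriv (fun z => F (c * z))) (fun z => c * deriv F (c * z)) s := by
    intro z hz
    have h := deriv_comp z (hz' z hz).differentiableAt (differentiableAt_fun_id.const_mul c)
    simp only [Function.comp_def] at h
    rw [h, deriv_const_mul_field, deriv_id'', mul_one, mul_comm]
  have e2 : Set.EqOn (deriv (fun z => c * deriv F (c * z)))
      (fun z => c ^ 2 * deriv (deriv F) (c * z)) s := by
    intro z hz
    have h := deriv_comp z (analyticAt_deriv' (hz' z hz)).differentiableAt
      (differentiableAt_fun_id.const_mul c)
    simp only [Function.comp_def] at h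
    rw [deriv_const_mul_field, h, deriv_const_mul_field, deriv_id'', mul_one]
    ring
  have e3 : deriv (fun z => c ^ 2 * deriv (deriv F) (c * z)) 0
      = c ^ 3 * deriv (deriv (deriv F)) 0 := by
    have h := deriv_comp 0 (analyticAt_deriv' (analyticAt_deriv' (hz' 0 h0))).differentiableAt
      (differentiableAt_fun_id.const_mul c)
    simp only [Function.comp_def] at h
    rw [deriv_const_mul_field, h, deriv_const_mul_field, deriv_id'', mul_one, mul_zero]
    ring
  have E2 : Set.EqOn (deriv (deriv (fun z => F (c * z))))
      (fun z => c ^ 2 * deriv (deriv F) (c * z)) s :=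
    fun z hz => (eqOn_deriv' hs e1 hz).trans (e2 hz)
  refine ⟨?_, ?_, ?_⟩
  · have := e1 h0; simp only [mul_zero] at this; exact this
  · have := E2 h0; simp only [mul_zero] at this; exact this
  · rw [(eqOn_deriv' hs E2) h0, e3]

private lemma sub3 {u v : ℂ → ℂ} (hu : AnalyticAt ℂ u 0) (hv : AnalyticAt ℂ v 0) :
    deriv (fun z => u z - v z) 0 = deriv u 0 - deriv v 0 ∧
    deriv (deriv (fun z => u z - v z)) 0 = deriv (deriv u) 0 - deriv (deriv v) 0 ∧
    deriv (deriv (deriv (fun z => u z - v z))) 0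
      = deriv (deriv (deriv u)) 0 - deriv (deriv (deriv v)) 0 := by
  set s : Set ℂ := {z | AnalyticAt ℂ u z} ∩ {z | AnalyticAt ℂ v z} with hs_def
  have hs : IsOpen s := (isOpen_analyticAt ℂ u).inter (isOpen_analyticAt ℂ v)
  have h0 : (0:ℂ) ∈ s := ⟨hu, hv⟩
  have e1 : Set.EqOn (deriv (fun z => u z - v z)) (fun z => deriv u z - deriv v z) s :=
    fun z hz => deriv_sub hz.1.differentiableAt hz.2.differentiableAt
  have e2 : Set.EqOn (deriv (fun z => deriv u z - deriv v z))
      (fun z => deriv (deriv u) z - deriv (deriv v) z) s := fun z hz =>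
    deriv_sub (analyticAt_deriv' hz.1).differentiableAt (analyticAt_deriv' hz.2).differentiableAt
  have E2 : Set.EqOn (deriv (deriv (fun z => u z - v z)))
      (fun z => deriv (deriv u) z - deriv (deriv v) z) s :=
    fun z hz => (eqOn_deriv' hs e1 hz).trans (e2 hz)
  have e3 : deriv (fun z => deriv (deriv u) z - deriv (deriv v) z) 0
      = deriv (deriv (deriv u)) 0 - deriv (deriv (deriv v)) 0 :=
    deriv_sub (analyticAt_deriv' (analyticAt_deriv' hu)).differentiableAt
      (analyticAt_deriv' (analyticAt_deriv' hv)).differentiableAt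
  exact ⟨e1 h0, E2 h0, by rw [(eqOn_deriv' hs E2) h0, e3]⟩

set_option maxHeartbeats 2000000 in
theorem starlike_fekete_szego_identity
    (q : ℝ) (hq0 : 0 < q) (hq1 : q < 1)
    (a : ℕ → ℂ) (ha0 : a 0 = 0) (ha1 : a 1 = 1)
    (f F DqF : ℂ → ℂ)
    (hf : ∀ z ∈ Metric.ball (0 : ℂ) 1, HasSum (fun n : ℕ => a n * z ^ n) (f z))
    (hF : ∀ z ∈ Metric.ball (0 : ℂ) 1,
      HasSum (fun n : ℕ =>
        (-1 : ℂ) ^ (n - 1) * a n / (((2 * n - 1 : ℕ) : ℂ) * ((n - 1).factorial : ℂ)) * z ^ n)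
        (F z))
    (hDq0 : DqF 0 = 1)
    (hDqF : ∀ z : ℂ, z ≠ 0 → DqF z = (F z - F ((q : ℂ) * z)) / ((1 - (q : ℂ)) * z))
    (ϑ2 ϑ3 : ℝ)
    (hϑ2 : ϑ2 = (1 - q ^ 2) / (1 - q) - 1)
    (hϑ3 : ϑ3 = (1 - q ^ 3) / (1 - q) - 1)
    (w : ℂ → ℂ)
    (hw : AnalyticOnNhd ℂ w (Metric.ball (0 : ℂ) 1))
    (hw0 : w 0 = 0)
    (hwb : ∀ z ∈ Metric.ball (0 : ℂ) 1, ‖w z‖ < 1)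
    (w1 w2 : ℂ) (hw1 : w1 = deriv w 0) (hw2 : w2 = iteratedDeriv 2 w 0 / 2)
    (β : ℝ) (hβ1 : -(Real.pi / 2) < β) (hβ2 : β < Real.pi / 2)
    (ϱ : ℂ) (hϱ : ϱ = 1 + Complex.I * (Real.tan β : ℂ))
    (b : ℂ) (hb : b ≠ 0)
    (p : ℂ → ℂ)
    (hp : AnalyticOnNhd ℂ p (Metric.ball (0 : ℂ) 1))
    (hp0 : p 0 = 1)
    (p1 p2 : ℂ) (hp1 : p1 = deriv p 0) (hp2 : p2 = iteratedDeriv 2 p 0 / 2)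
    (hFne : ∀ z ∈ Metric.ball (0 : ℂ) 1, z ≠ 0 → F z ≠ 0)
    (hsub : ∀ z ∈ Metric.ball (0 : ℂ) 1, z ≠ 0 →
      1 + (1 / b) * (ϱ * (z * DqF z / F z) - ϱ) = p (w z))
    :
    ∀ μ : ℂ, a 3 - μ * (a 2) ^ 2 = (10 * b / (ϱ * (ϑ3 : ℂ))) *
      (p1 * w2 +
        (p2 + b * p1 ^ 2 * (10 * (ϑ2 : ℂ) - 9 * μ * (ϑ3 : ℂ)) / (10 * ϱ * (ϑ2 : ℂ) ^ 2))
          * w1 ^ 2) := by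
  have h0mem : (0:ℂ) ∈ Metric.ball (0:ℂ) 1 := by simp
  set Q : ℂ := (q : ℂ) with hQ
  -- basic nonvanishing facts
  have hq1' : (1:ℝ) - q ≠ 0 := sub_ne_zero.mpr (ne_of_gt (by linarith))
  have hQ0 : Q ≠ 0 := Complex.ofReal_ne_zero.mpr (ne_of_gt hq0)
  have h1mQ : (1:ℂ) - Q ≠ 0 := by
    rw [show (1:ℂ) - Q = ((1 - q : ℝ) : ℂ) by push_cast; ring]
    exact Complex.ofReal_ne_zero.mpr hq1'
  have h1pQ : (1:ℂ) + Q ≠ 0 := by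
    rw [show (1:ℂ) + Q = ((1 + q : ℝ) : ℂ) by push_cast; ring]
    exact Complex.ofReal_ne_zero.mpr (ne_of_gt (by linarith))
  have hϱ0 : ϱ ≠ 0 := by
    have hre : ϱ.re = 1 := by rw [hϱ]; simp
    intro h
    rw [h] at hre
    simp at hre
  have hϑ2C : (ϑ2 : ℂ) = Q := by
    have : ϑ2 = q := by rw [hϑ2]; field_simp; ring
    rw [this]
  have hϑ3C : (ϑ3 : ℂ) = Q + Q ^ 2 := by
    have : ϑ3 = q + q ^ 2 := by rw [hϑ3]; field_simp; ring
    rw [this]; push_cast; ring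
  -- power series of F
  set c : ℕ → ℂ := fun n =>
    (-1 : ℂ) ^ (n - 1) * a n / (((2 * n - 1 : ℕ) : ℂ) * ((n - 1).factorial : ℂ)) with hc
  have hFps : HasFPowerSeriesAt F (FormalMultilinearSeries.ofScalars ℂ c) 0 := by
    rw [hasFPowerSeriesAt_iff]
    filter_upwards [Metric.ball_mem_nhds (0:ℂ) one_pos] with z hz
    have h1 : (fun n => z ^ n • (FormalMultilinearSeries.ofScalars ℂ c).coeff n)
        = fun n => c n * z ^ n := by
      funext n
      rw [FormalMultilinearSeries.coeff]
      show z ^ n • (FormalMultilinearSeries.ofScalars ℂ c n) (fun _ => (1:ℂ)) = c n * z ^ n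
      rw [FormalMultilinearSeries.ofScalars_apply_eq, smul_eq_mul, smul_eq_mul, one_pow,
        mul_one, mul_comm]
    rw [zero_add, h1]
    exact hF z hz
  have hFa : AnalyticAt ℂ F 0 := hFps.analyticAt
  have key : ∀ n : ℕ, iteratedDeriv n F 0 = (n.factorial : ℂ) * c n := by
    intro n
    obtain ⟨r, hr⟩ := hFps
    have h2 := hr.factorial_smul (1 : ℂ) n
    rw [iteratedDeriv_eq_iteratedFDeriv, ← h2, FormalMultilinearSeries.ofScalars_apply_eq]
    simp [smul_eq_mul]
  have F0 : F 0 = 0 := by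
    have h := key 0
    rw [iteratedDeriv_zero] at h
    rw [h, hc]
    norm_num [ha0]
  have F1 : deriv F 0 = 1 := by
    have h := key 1
    rw [iteratedDeriv_one] at h
    rw [h, hc]
    norm_num [ha1]
  have F2v : deriv (deriv F) 0 = -(2 * a 2) / 3 := by
    have h := key 2
    rw [itd2'] at h
    rw [h, hc]
    norm_num [Nat.factorial]
    ring
  have F3v : deriv (deriv (deriv F)) 0 = 3 * a 3 / 5 := by
    have h := key 3
    rw [itd3'] at h
    rw [h, hc]
    norm_num [Nat.factorial]
    ring
  -- analyticity of the pieces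
  have hwa : AnalyticAt ℂ w 0 := hw 0 h0mem
  have hpa : AnalyticAt ℂ p (w 0) := by rw [hw0]; exact hp 0 h0mem
  have hpwa : AnalyticAt ℂ (fun z => p (w z)) 0 := by
    have := hpa.comp hwa
    simpa [Function.comp_def] using this
  set U : ℂ → ℂ := fun z => p (w z) - 1 with hUdef
  have hUa : AnalyticAt ℂ U 0 := hpwa.sub analyticAt_const
  have hU0 : U 0 = 0 := by simp [hUdef, hw0, hp0]
  have hUd : deriv U = deriv (fun z => p (w z)) := by
    funext z
    exact deriv_sub_const 1
  have hch := chain2 hwa hpa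
  have U1 : deriv U 0 = p1 * w1 := by
    rw [hUd, hch.1, hw0, hp1, hw1]
  have U2 : deriv (deriv U) 0 = 2 * p2 * w1 ^ 2 + p1 * (2 * w2) := by
    rw [hUd, hch.2, hw0]
    have hp2' : deriv (deriv p) 0 = 2 * p2 := by
      rw [hp2, ← itd2']; ring
    have hw2' : deriv (deriv w) 0 = 2 * w2 := by
      rw [hw2, ← itd2']; ring
    rw [hp2', hw2', hp1, hw1]
  -- the subordination identity as equality of two analytic functions near 0
  have hGH : (fun z => b * (U z * F z)) =ᶠ[𝓝 (0:ℂ)]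
      (fun z => (ϱ / (1 - Q)) * (Q * F z - F (Q * z))) := by
    filter_upwards [Metric.ball_mem_nhds (0:ℂ) one_pos] with z hz
    by_cases hz0 : z = 0
    · subst hz0
      simp [hUdef, hw0, hp0, F0]
    · have h1 := hsub z hz hz0
      have h2 := hDqF z hz0
      have h3 := hFne z hz hz0
      simp only [hUdef]
      rw [← h1, h2]
      field_simp
      ring
  have hGH2 := Filter.EventuallyEq.iteratedDeriv_eq 2 hGH
  have hGH3 := Filter.EventuallyEq.iteratedDeriv_eq 3 hGH
  rw [itd2'] at hGH2
  rw [itd2' (fun z => ϱ / (1 - Q) * (Q * F z - F (Q * z)))] at hGH2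
  rw [itd3'] at hGH3
  rw [itd3' (fun z => ϱ / (1 - Q) * (Q * F z - F (Q * z)))] at hGH3
  -- compute left sides
  have hm := mul23 hUa hFa
  have L2 : deriv (deriv (fun z => b * (U z * F z))) 0
      = b * deriv (deriv (fun z => U z * F z)) 0 := by
    rw [deriv_const_mul_field' b, deriv_const_mul_field]
  have L3 : deriv (deriv (deriv (fun z => b * (U z * F z)))) 0
      = b * deriv (deriv (deriv (fun z => U z * F z))) 0 := by
    rw [deriv_const_mul_field' b, deriv_const_mul_field' b, deriv_const_mul_field]
  -- compute right sides
  have hQFa : AnalyticAt ℂ (fun z => Q * F z) 0 := analyticAt_const.mul hFa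
  have hFQa : AnalyticAt ℂ (fun z => F (Q * z)) 0 := by
    have h1 : AnalyticAt ℂ (fun z : ℂ => Q * z) 0 := analyticAt_const.mul analyticAt_id
    have h2 : AnalyticAt ℂ F ((fun z : ℂ => Q * z) 0) := by simpa using hFa
    have := h2.comp h1
    simpa [Function.comp_def] using this
  have hsu := sub3 hQFa hFQa
  have hsc := scale3 hFa Q
  have qf1 : deriv (fun z => Q * F z) 0 = Q * deriv F 0 := deriv_const_mul_field Q
  have qf2 : deriv (deriv (fun z => Q * F z)) 0 = Q * deriv (deriv F) 0 := by
    rw [deriv_const_mul_field' Q, deriv_const_mul_field]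
  have qf3 : deriv (deriv (deriv (fun z => Q * F z))) 0 = Q * deriv (deriv (deriv F)) 0 := by
    rw [deriv_const_mul_field' Q, deriv_const_mul_field' Q, deriv_const_mul_field]
  have R2 : deriv (deriv (fun z => ϱ / (1 - Q) * (Q * F z - F (Q * z)))) 0
      = ϱ / (1 - Q) * (Q * deriv (deriv F) 0 - Q ^ 2 * deriv (deriv F) 0) := by
    rw [deriv_const_mul_field' (ϱ / (1 - Q)), deriv_const_mul_field, hsu.2.1, qf2, hsc.2.1]
  have R3 : deriv (deriv (deriv (fun z => ϱ / (1 - Q) * (Q * F z - F (Q * z))))) 0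
      = ϱ / (1 - Q) * (Q * deriv (deriv (deriv F)) 0 - Q ^ 3 * deriv (deriv (deriv F)) 0) := by
    rw [deriv_const_mul_field' (ϱ / (1 - Q)), deriv_const_mul_field' (ϱ / (1 - Q)),
      deriv_const_mul_field, hsu.2.2, qf3, hsc.2.2]
  -- assemble the two coefficient equations
  have E1 : b * (2 * (p1 * w1)) = ϱ / (1 - Q) * (Q * (-(2 * a 2) / 3) - Q ^ 2 * (-(2 * a 2) / 3)) := by
    have h := hGH2
    rw [L2, hm.2.1, R2, hU0, F0, F1, F2v, U1] at h
    rw [← h]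
    ring
  have E2 : b * (3 * ((2 * p2 * w1 ^ 2 + p1 * (2 * w2)) * 1)
        + 3 * (p1 * w1 * (-(2 * a 2) / 3)))
      = ϱ / (1 - Q) * (Q * (3 * a 3 / 5) - Q ^ 3 * (3 * a 3 / 5)) := by
    have h := hGH3
    rw [L3, hm.2.2, R3, hU0, F0, F1, F2v, F3v, U1, U2] at h
    rw [← h]
    ring
  -- simplify the (1-Q) cancellation
  have E1' : ϱ * Q * a 2 = -(3 * b * p1 * w1) := by
    have hcan : ϱ / (1 - Q) * (Q * (-(2 * a 2) / 3) - Q ^ 2 * (-(2 * a 2) / 3))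
        = ϱ * Q * (-(2 * a 2) / 3) := by
      field_simp
      ring
    rw [hcan] at E1
    linear_combination (3 / 2 : ℂ) * E1
  have E2' : ϱ * (Q + Q ^ 2) * a 3
      = 10 * b * (p2 * w1 ^ 2 + p1 * w2) - (10 / 3) * b * p1 * w1 * a 2 := by
    have hcan : ϱ / (1 - Q) * (Q * (3 * a 3 / 5) - Q ^ 3 * (3 * a 3 / 5))
        = ϱ * (Q + Q ^ 2) * (3 * a 3 / 5) := by
      field_simp
      ring
    rw [hcan] at E2
    linear_combination (-5 / 3 : ℂ) * E2
  -- final algebra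
  intro μ
  rw [hϑ2C, hϑ3C]
  have hQQ : Q + Q ^ 2 ≠ 0 := by
    intro h
    apply hQ0
    have : Q * (1 + Q) = 0 := by rw [← h]; ring
    rcases mul_eq_zero.mp this with h' | h'
    · exact h'
    · exact absurd h' h1pQ
  have ha2 : a 2 = -(3 * b * p1 * w1) / (ϱ * Q) := by
    field_simp
    linear_combination E1'
  have ha3 : a 3 = (10 * b * (p2 * w1 ^ 2 + p1 * w2) * ϱ * Q + 10 * b ^ 2 * p1 ^ 2 * w1 ^ 2)
      / (ϱ ^ 2 * Q ^ 2 * (1 + Q)) := by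
    rw [ha2] at E2'
    field_simp at E2' ⊢
    linear_combination E2'
  have hbig : ϱ ^ 4 * Q ^ 4 + ϱ ^ 4 * Q ^ 5 ≠ 0 := by
    have : ϱ ^ 4 * Q ^ 4 + ϱ ^ 4 * Q ^ 5 = ϱ ^ 4 * Q ^ 4 * (1 + Q) := by ring
    rw [this]
    exact mul_ne_zero (mul_ne_zero (pow_ne_zero 4 hϱ0) (pow_ne_zero 4 hQ0)) h1pQ
  rw [ha3, ha2]
  rw [show Q + Q ^ 2 = Q * (1 + Q) by ring]
  field_simp [hϱ0, hQ0, h1pQ]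
  ring
end

section
/- Let 0 ≤ α < 1 and take p(z) = (1 + (1 − 2α)z)/(1 − z), so that p₁ = p₂ = 2(1 − α). Under the spirallike-starlike subordination hypothesis with this p, writing ϑ₂ = [2]_q − 1 and ϑ₃ = [3]_q − 1, for every complex number μ one has |a₃ − μ·a₂²| ≤ (20·|b|·(1 − α)/(|ϱ|·ϑ₃)) · max{ 1, | 1 + b·(1 − α)·(10·ϑ₂ − 9·μ·ϑ₃)/(5·ϱ·ϑ₂²) | }. -/
open Metric Function

lemma moebius_lt' (u v : ℂ) (hu : ‖u‖ < 1) (hv : ‖v‖ < 1) :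
    ‖u - v‖ < ‖1 - (starRingEnd ℂ v) * u‖ := by
  have h2 : Complex.normSq (1 - (starRingEnd ℂ v) * u) - Complex.normSq (u - v)
      = (1 - Complex.normSq u) * (1 - Complex.normSq v) := by
    simp [Complex.normSq_apply, Complex.sub_re, Complex.sub_im, Complex.mul_re, Complex.mul_im,
      Complex.conj_re, Complex.conj_im]
    ring
  have hu' : Complex.normSq u < 1 := by
    rwa [← Complex.sq_norm, sq_lt_one_iff_abs_lt_one, abs_of_nonneg (norm_nonneg u)]
  have hv' : Complex.normSq v < 1 := by
    rwa [← Complex.sq_norm, sq_lt_one_iff_abs_lt_one, abs_of_nonneg (norm_nonneg v)]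
  have : ‖u - v‖ ^ 2 < ‖1 - (starRingEnd ℂ v) * u‖ ^ 2 := by
    rw [Complex.sq_norm, Complex.sq_norm]; nlinarith
  exact lt_of_pow_lt_pow_left₀ 2 (norm_nonneg _) this

lemma schwarz_two' (w : ℂ → ℂ) (hd : DifferentiableOn ℂ w (ball (0:ℂ) 1))
    (hw0 : w 0 = 0) (hwb : ∀ z ∈ ball (0:ℂ) 1, ‖w z‖ < 1) :
    ‖deriv w 0‖ ≤ 1 ∧
      ‖deriv (dslope w 0) 0‖ ≤ 1 - ‖deriv w 0‖ ^ 2 := by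
  have h01 : (0:ℂ) ∈ ball (0:ℂ) 1 := by simp
  have hmaps : Set.MapsTo w (ball (0:ℂ) 1) (ball (w 0) 1) := by
    intro z hz; simp [hw0, mem_ball, Complex.dist_eq] at *; exact hwb z hz
  set φ : ℂ → ℂ := dslope w 0 with hφ
  have hφle : ∀ z ∈ ball (0:ℂ) 1, ‖φ z‖ ≤ 1 := by
    intro z hz
    have := Complex.norm_dslope_le_div_of_mapsTo_ball hd (hmaps.mono_right ball_subset_closedBall) hz
    simpa using this
  have hc1 : φ 0 = deriv w 0 := dslope_same w 0
  have hc1le : ‖deriv w 0‖ ≤ 1 := by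
    have := hφle 0 h01; rwa [hc1] at this
  refine ⟨hc1le, ?_⟩
  have hφdiff : DifferentiableOn ℂ φ (ball (0:ℂ) 1) :=
    (Complex.differentiableOn_dslope (ball_mem_nhds _ one_pos)).mpr hd
  have hφ0diff : DifferentiableAt ℂ φ 0 :=
    hφdiff.differentiableAt (ball_mem_nhds _ one_pos)
  by_cases hcase : ∃ z' ∈ ball (0:ℂ) 1, ‖φ z'‖ = 1
  · obtain ⟨z', hz', he⟩ := hcase
    have heq : Set.EqOn w (fun z => w 0 + (z - 0) • φ z') (ball (0:ℂ) 1) := by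
      refine Complex.affine_of_mapsTo_ball_of_exists_norm_dslope_eq_div hd (hmaps.mono_right ball_subset_closedBall) hz' ?_
      simpa using he
    have hweq : ∀ᶠ z in nhds (0:ℂ), w z = z * φ z' := by
      filter_upwards [ball_mem_nhds (0:ℂ) one_pos] with z hz
      simpa [hw0, smul_eq_mul] using heq hz
    have hder : deriv w 0 = φ z' := by
      have : deriv w 0 = deriv (fun z : ℂ => z * φ z') 0 := Filter.EventuallyEq.deriv_eq hweq
      simpa using this
    have hφconst : ∀ᶠ z in nhds (0:ℂ), φ z = φ z' := by
      filter_upwards [ball_mem_nhds (0:ℂ) one_pos] with z hz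
      rcases eq_or_ne z 0 with rfl | hz0
      · rw [hc1, hder]
      · rw [hφ, dslope_of_ne _ hz0, slope_def_field, hw0]
        rw [heq hz]
        field_simp [hw0]
        simp [hw0, hφ]
    have hD : deriv φ 0 = 0 := by
      rw [Filter.EventuallyEq.deriv_eq hφconst]; simp
    rw [hD, hder, he]
    norm_num
  · push_neg at hcase
    have hφlt : ∀ z ∈ ball (0:ℂ) 1, ‖φ z‖ < 1 := fun z hz =>
      lt_of_le_of_ne (hφle z hz) (hcase z hz)
    have hc1lt : ‖deriv w 0‖ < 1 := by rw [← hc1]; exact hφlt 0 h01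
    set c1 := deriv w 0 with hc1def
    set k := starRingEnd ℂ c1 with hk
    set ψ : ℂ → ℂ := fun z => (φ z - c1) / (1 - k * φ z) with hψ
    have habs : ∀ z ∈ ball (0:ℂ) 1, ‖φ z - c1‖ < ‖1 - k * φ z‖ :=
      fun z hz => moebius_lt' (φ z) c1 (hφlt z hz) hc1lt
    have hden : ∀ z ∈ ball (0:ℂ) 1, 1 - k * φ z ≠ 0 := by
      intro z hz
      intro h
      have := habs z hz
      rw [h] at this
      simp only [norm_zero] at this
      exact (norm_nonneg _).not_gt this
    have hψd : DifferentiableOn ℂ ψ (ball (0:ℂ) 1) := by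
      apply DifferentiableOn.div
      · exact hφdiff.sub (differentiableOn_const _)
      · exact (differentiableOn_const _).sub ((differentiableOn_const _).mul hφdiff)
      · exact hden
    have hkc1 : k * c1 = (Complex.normSq c1 : ℂ) := by
      rw [hk, mul_comm, Complex.mul_conj]
    have hd0 : (1 : ℂ) - k * c1 ≠ 0 := by
      rw [hkc1]
      intro h
      rw [sub_eq_zero] at h
      have : Complex.normSq c1 = 1 := by exact_mod_cast h.symm
      have h2 : Complex.normSq c1 < 1 := by
        rwa [← Complex.sq_norm, sq_lt_one_iff_abs_lt_one, abs_of_nonneg (norm_nonneg _)]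
      rw [this] at h2; exact lt_irrefl 1 h2
    have hψ0 : ψ 0 = 0 := by simp [hψ, hc1]
    have hψmaps : Set.MapsTo ψ (ball (0:ℂ) 1) (ball (ψ 0) 1) := by
      intro z hz
      rw [hψ0, mem_ball, dist_zero_right, hψ]
      simp only [norm_div]
      rw [div_lt_one (lt_of_le_of_lt (norm_nonneg _) (habs z hz))]
      exact habs z hz
    have hψs : ‖deriv ψ 0‖ ≤ 1 := by
      have := Complex.norm_dslope_le_div_of_mapsTo_ball hψd (hψmaps.mono_right ball_subset_closedBall) h01
      rw [dslope_same] at this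
      simpa using this
    have hnum : HasDerivAt (fun z => φ z - c1) (deriv φ 0) 0 :=
      (hφ0diff.hasDerivAt.sub_const c1)
    have hdenD : HasDerivAt (fun z => 1 - k * φ z) (-(k * deriv φ 0)) 0 := by
      have := (hφ0diff.hasDerivAt.const_mul k).const_sub 1
      simpa using this
    have hψder : HasDerivAt ψ ((deriv φ 0 * (1 - k * φ 0) - (φ 0 - c1) * (-(k * deriv φ 0)))
        / (1 - k * φ 0) ^ 2) 0 := by
      exact hnum.div hdenD (by rw [hc1]; exact hd0)
    have hψder0 : deriv ψ 0 = deriv φ 0 / (1 - k * c1) := by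
      rw [hψder.deriv, hc1]
      field_simp
      ring
    rw [hψder0, norm_div] at hψs
    have h1k : ‖1 - k * c1‖ = 1 - ‖c1‖ ^ 2 := by
      rw [hkc1, ← Complex.sq_norm, ← Complex.ofReal_one, ← Complex.ofReal_sub,
        Complex.norm_real, Real.norm_eq_abs, abs_of_nonneg (by nlinarith [norm_nonneg c1])]
    rw [h1k] at hψs
    rw [div_le_one (by nlinarith [norm_nonneg c1])] at hψs
    simpa using hψs

lemma hasFPowerSeries_of_hasSum' (A : ℕ → ℂ) (F : ℂ → ℂ)
    (hF : ∀ z ∈ ball (0:ℂ) 1, HasSum (fun n => A n * z ^ n) (F z)) :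
    HasFPowerSeriesAt F (FormalMultilinearSeries.ofScalars ℂ A) 0 := by
  set p := FormalMultilinearSeries.ofScalars ℂ A with hp
  have hrad : 1 ≤ p.radius := by
    apply ENNReal.le_of_forall_nnreal_lt
    intro r hr
    have hr1 : (r : ℝ) < 1 := by exact_mod_cast hr
    have hmem : ((r : ℝ) : ℂ) ∈ ball (0:ℂ) 1 := by
      simp [mem_ball, Complex.dist_eq, abs_of_nonneg r.coe_nonneg, hr1]
    have hs := (hF _ hmem).summable
    have ht : Filter.Tendsto (fun n => ‖p n‖ * (r:ℝ) ^ n) Filter.atTop (nhds 0) := by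
      have h0 := hs.tendsto_atTop_zero
      have := h0.norm
      simp only [norm_zero] at this
      convert this using 2 with n
      rw [hp, FormalMultilinearSeries.ofScalars_norm]
      simp [abs_of_nonneg r.coe_nonneg]
    exact p.le_radius_of_tendsto ht
  have hball : HasFPowerSeriesOnBall F p 0 1 := by
    refine ⟨hrad, one_pos, ?_⟩
    intro y hy
    have hy' : y ∈ ball (0:ℂ) 1 := by
      rw [EMetric.mem_ball, edist_zero_right] at hy
      rw [mem_ball, dist_zero_right]
      rw [← ofReal_norm, ENNReal.ofReal_lt_one] at hy
      exact hy
    have := hF y hy'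
    simp only [zero_add]
    convert this using 2 with n
    · rfl
    rw [hp, FormalMultilinearSeries.ofScalars_apply_eq, smul_eq_mul]
  exact hball.hasFPowerSeriesAt

lemma ofScalars_coeff' (A : ℕ → ℂ) (n : ℕ) :
    (FormalMultilinearSeries.ofScalars ℂ A).coeff n = A n := by
  have h := FormalMultilinearSeries.ofScalars_apply_eq (E := ℂ) A (1:ℂ) n
  rw [FormalMultilinearSeries.coeff]
  simpa using h

lemma fekete_maxbound (x s2 y : ℝ) (hx0 : 0 ≤ x) (hx : x ≤ 1) (hs : 0 ≤ s2)
    (hyb : y ≤ 1 - x ^ 2) : y + s2 * x ^ 2 ≤ max 1 s2 := by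
  have hx2 : x ^ 2 ≤ 1 := pow_le_one₀ hx0 hx
  rcases max_cases 1 s2 with ⟨h, hle⟩ | ⟨h, hle⟩ <;> rw [h]
  · nlinarith [mul_nonneg (sub_nonneg.mpr hle) (sq_nonneg x)]
  · nlinarith [mul_nonneg (sub_nonneg.mpr hle.le) (sub_nonneg.mpr hx2)]

lemma fekete_algebra (ϱ T2 T3 b L c1 c2 μ A2 A3 : ℂ)
    (hϱ : ϱ ≠ 0) (hT2 : T2 ≠ 0) (hT3 : T3 ≠ 0)
    (hE2 : ϱ * (T2 * A2) = 2 * b * L * c1)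
    (hE3 : ϱ * (T3 * A3 - T2 * A2 * c1) = 2 * b * L * (A2 * c1 + c2)) :
    10 * A3 - μ * (-3 * A2) ^ 2
      = (20 * b * L / (ϱ * T3)) * (c2 + (1 + b * L * (10 * T2 - 9 * μ * T3) / (5 * ϱ * T2 ^ 2)) * c1 ^ 2) := by
  have hA2e : A2 = 2 * b * L * c1 / (ϱ * T2) := by
    rw [eq_div_iff (mul_ne_zero hϱ hT2)]
    linear_combination hE2
  have hA3e : A3 = (ϱ * T2 * A2 * c1 + 2 * b * L * (A2 * c1 + c2)) / (ϱ * T3) := by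
    rw [eq_div_iff (mul_ne_zero hϱ hT3)]
    linear_combination hE3
  rw [hA3e, hA2e]
  field_simp
  ring

set_option maxHeartbeats 2000000 in
theorem starlike_fekete_szego_bound_alpha
    (q : ℝ) (hq0 : 0 < q) (hq1 : q < 1)
    (a : ℕ → ℂ) (ha0 : a 0 = 0) (ha1 : a 1 = 1)
    (f F DqF : ℂ → ℂ)
    (hf : ∀ z ∈ Metric.ball (0 : ℂ) 1, HasSum (fun n : ℕ => a n * z ^ n) (f z))
    (hF : ∀ z ∈ Metric.ball (0 : ℂ) 1,
      HasSum (fun n : ℕ =>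
        (-1 : ℂ) ^ (n - 1) * a n / (((2 * n - 1 : ℕ) : ℂ) * ((n - 1).factorial : ℂ)) * z ^ n)
        (F z))
    (hDq0 : DqF 0 = 1)
    (hDqF : ∀ z : ℂ, z ≠ 0 → DqF z = (F z - F ((q : ℂ) * z)) / ((1 - (q : ℂ)) * z))
    (ϑ2 ϑ3 : ℝ)
    (hϑ2 : ϑ2 = (1 - q ^ 2) / (1 - q) - 1)
    (hϑ3 : ϑ3 = (1 - q ^ 3) / (1 - q) - 1)
    (w : ℂ → ℂ)
    (hw : AnalyticOnNhd ℂ w (Metric.ball (0 : ℂ) 1))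
    (hw0 : w 0 = 0)
    (hwb : ∀ z ∈ Metric.ball (0 : ℂ) 1, ‖w z‖ < 1)
    (β : ℝ) (hβ1 : -(Real.pi / 2) < β) (hβ2 : β < Real.pi / 2)
    (ϱ : ℂ) (hϱ : ϱ = 1 + Complex.I * (Real.tan β : ℂ))
    (b : ℂ) (hb : b ≠ 0)
    (α : ℝ) (hα0 : 0 ≤ α) (hα1 : α < 1)
    (hFne : ∀ z ∈ Metric.ball (0 : ℂ) 1, z ≠ 0 → F z ≠ 0)
    (hsub : ∀ z ∈ Metric.ball (0 : ℂ) 1, z ≠ 0 →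
      1 + (1 / b) * (ϱ * (z * DqF z / F z) - ϱ)
        = (1 + (1 - 2 * (α : ℂ)) * w z) / (1 - w z))
    :
    ∀ μ : ℂ, ‖a 3 - μ * (a 2) ^ 2‖ ≤
      (20 * ‖b‖ * (1 - α) / (‖ϱ‖ * ϑ3)) *
        max 1 (‖1 +
          b * (1 - (α : ℂ)) * (10 * (ϑ2 : ℂ) - 9 * μ * (ϑ3 : ℂ)) / (5 * ϱ * (ϑ2 : ℂ) ^ 2)‖) := by
  intro μ
  have h01 : (0:ℂ) ∈ ball (0:ℂ) 1 := by simp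
  -- basic nonvanishing facts
  have hqR : (1:ℝ) - q ≠ 0 := by intro hc; nlinarith
  have hqC : (1:ℂ) - (q:ℂ) ≠ 0 := sub_ne_zero.mpr (by exact_mod_cast hq1.ne')
  have hϑ2v : ϑ2 = q := by rw [hϑ2]; field_simp; ring
  have hϑ3v : ϑ3 = q + q ^ 2 := by rw [hϑ3]; field_simp; ring
  have hϑ2pos : 0 < ϑ2 := by rw [hϑ2v]; exact hq0
  have hϑ3pos : 0 < ϑ3 := by rw [hϑ3v]; positivity
  have hT2 : ((ϑ2 : ℂ)) = (1 - (q:ℂ) ^ 2) / (1 - (q:ℂ)) - 1 := by rw [hϑ2]; push_cast; ring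
  have hT3 : ((ϑ3 : ℂ)) = (1 - (q:ℂ) ^ 3) / (1 - (q:ℂ)) - 1 := by rw [hϑ3]; push_cast; ring
  have hT2ne : ((ϑ2 : ℂ)) ≠ 0 := by exact_mod_cast hϑ2pos.ne'
  have hT3ne : ((ϑ3 : ℂ)) ≠ 0 := by exact_mod_cast hϑ3pos.ne'
  have hϱre : ϱ.re = 1 := by rw [hϱ]; simp
  have hϱne : ϱ ≠ 0 := by intro h; rw [h] at hϱre; simp at hϱre
  have hαne : (1:ℂ) - (α:ℂ) ≠ 0 := by
    intro h
    rw [sub_eq_zero] at h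
    have : (α:ℝ) = 1 := by exact_mod_cast h.symm
    linarith
  -- the power series of F
  set A : ℕ → ℂ := fun n : ℕ =>
    (-1 : ℂ) ^ (n - 1) * a n / (((2 * n - 1 : ℕ) : ℂ) * ((n - 1).factorial : ℂ)) with hA
  have hpF : HasFPowerSeriesAt F (FormalMultilinearSeries.ofScalars ℂ A) 0 :=
    hasFPowerSeries_of_hasSum' A F hF
  have hA0 : A 0 = 0 := by simp [hA, ha0]
  have hA1 : A 1 = 1 := by norm_num [hA, ha1]
  have hA2 : A 2 = -a 2 / 3 := by norm_num [hA]
  have hA3 : A 3 = a 3 / 10 := by norm_num [hA, Nat.factorial]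
  clear_value A
  -- dslope tower for F
  set Φ1 : ℂ → ℂ := dslope F 0 with hΦ1def
  set Φ2 : ℂ → ℂ := dslope Φ1 0 with hΦ2def
  set Φ3 : ℂ → ℂ := dslope Φ2 0 with hΦ3def
  have hpΦ1 : HasFPowerSeriesAt Φ1 (FormalMultilinearSeries.ofScalars ℂ A).fslope 0 :=
    hpF.has_fpower_series_dslope_fslope
  have hpΦ2 : HasFPowerSeriesAt Φ2 (FormalMultilinearSeries.ofScalars ℂ A).fslope.fslope 0 :=
    hpΦ1.has_fpower_series_dslope_fslope
  have hpΦ3 : HasFPowerSeriesAt Φ3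
      (FormalMultilinearSeries.ofScalars ℂ A).fslope.fslope.fslope 0 :=
    hpΦ2.has_fpower_series_dslope_fslope
  have hF0 : F 0 = 0 := by
    have h0 : (FormalMultilinearSeries.ofScalars ℂ A).coeff 0 = F 0 := hpF.coeff_zero 1
    rw [ofScalars_coeff', hA0] at h0
    exact h0.symm
  have hΦ10 : Φ1 0 = 1 := by
    have h0 : (FormalMultilinearSeries.ofScalars ℂ A).fslope.coeff 0 = Φ1 0 := hpΦ1.coeff_zero 1
    rw [FormalMultilinearSeries.coeff_fslope, ofScalars_coeff', hA1] at h0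
    exact h0.symm
  have hΦ20 : Φ2 0 = A 2 := by
    have h0 : (FormalMultilinearSeries.ofScalars ℂ A).fslope.fslope.coeff 0 = Φ2 0 :=
      hpΦ2.coeff_zero 1
    rw [FormalMultilinearSeries.coeff_fslope, FormalMultilinearSeries.coeff_fslope,
      ofScalars_coeff'] at h0
    exact h0.symm
  have hΦ30 : Φ3 0 = A 3 := by
    have h0 : (FormalMultilinearSeries.ofScalars ℂ A).fslope.fslope.fslope.coeff 0 = Φ3 0 :=
      hpΦ3.coeff_zero 1
    rw [FormalMultilinearSeries.coeff_fslope, FormalMultilinearSeries.coeff_fslope,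
      FormalMultilinearSeries.coeff_fslope, ofScalars_coeff'] at h0
    exact h0.symm
  have hFdec : ∀ z : ℂ, F z = z * (1 + z * (A 2 + z * Φ3 z)) := by
    intro z
    have h1 : z * Φ1 z = F z - F 0 := by
      have := sub_smul_dslope F 0 z; simpa [smul_eq_mul] using this
    have h2 : z * Φ2 z = Φ1 z - Φ1 0 := by
      have := sub_smul_dslope Φ1 0 z; simpa [smul_eq_mul] using this
    have h3 : z * Φ3 z = Φ2 z - Φ2 0 := by
      have := sub_smul_dslope Φ2 0 z; simpa [smul_eq_mul] using this
    rw [hF0, sub_zero] at h1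
    rw [hΦ10] at h2
    rw [hΦ20] at h3
    rw [← h1]
    have hΦ1z : Φ1 z = 1 + z * Φ2 z := by rw [h2]; ring
    have hΦ2z : Φ2 z = A 2 + z * Φ3 z := by rw [h3]; ring
    rw [hΦ1z, hΦ2z]
  clear_value Φ1 Φ2 Φ3
  -- dslope tower for w
  obtain ⟨pw, hpw⟩ := hw 0 h01
  set φ : ℂ → ℂ := dslope w 0 with hφdef
  set φ2 : ℂ → ℂ := dslope φ 0 with hφ2def
  set c1 : ℂ := φ 0 with hc1def
  set c2 : ℂ := φ2 0 with hc2def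
  have hpφ : HasFPowerSeriesAt φ pw.fslope 0 := hpw.has_fpower_series_dslope_fslope
  have hpφ2 : HasFPowerSeriesAt φ2 pw.fslope.fslope 0 := hpφ.has_fpower_series_dslope_fslope
  have hwdec : ∀ z : ℂ, w z = z * (c1 + z * φ2 z) := by
    intro z
    have h1 : z * φ z = w z - w 0 := by
      have := sub_smul_dslope w 0 z; simpa [smul_eq_mul] using this
    have h2 : z * φ2 z = φ z - φ 0 := by
      have := sub_smul_dslope φ 0 z; simpa [smul_eq_mul] using this
    rw [hw0, sub_zero] at h1
    rw [← h1]
    have hz2 : φ z = c1 + z * φ2 z := by rw [hc1def]; linear_combination -h2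
    rw [hz2]
  have hc1deriv : c1 = deriv w 0 := by rw [hc1def, hφdef, dslope_same]
  have hc2deriv : c2 = deriv φ 0 := by rw [hc2def, hφ2def, dslope_same]
  clear_value c1 c2 φ φ2
  -- the subordination identity, cleared of denominators
  have hstar : ∀ z ∈ ball (0:ℂ) 1, z ≠ 0 →
      ϱ * ((F z - F ((q:ℂ) * z)) / (1 - (q:ℂ)) - F z) * (1 - w z)
        = 2 * b * (1 - (α:ℂ)) * (F z * w z) := by
    intro z hz hz0
    have hFz : F z ≠ 0 := hFne z hz hz0
    have hwz : (1:ℂ) - w z ≠ 0 := by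
      intro h
      rw [sub_eq_zero] at h
      have := hwb z hz
      rw [← h] at this; simp at this
    have h := hsub z hz hz0
    have hZD : z * DqF z = (F z - F ((q:ℂ) * z)) / (1 - (q:ℂ)) := by
      rw [hDqF z hz0]
      field_simp
    rw [hZD] at h
    field_simp [hb, hFz, hwz] at h
    field_simp [hqC]
    linear_combination h
  -- quotient functions after dividing by z^2
  set G3 : ℂ → ℂ := fun z => (Φ3 z - (q:ℂ) ^ 3 * Φ3 ((q:ℂ) * z)) / (1 - (q:ℂ)) - Φ3 z with hG3def
  have hG30 : G3 0 = (ϑ3:ℂ) * A 3 := by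
    have : ((q:ℂ)) * 0 = 0 := mul_zero _
    rw [hG3def]
    simp only [this, hΦ30, mul_zero]
    rw [hT3]
    field_simp
  clear_value G3
  set P : ℂ → ℂ := fun z => ϱ * (((ϑ2:ℂ) * A 2 + z * G3 z) * (1 - w z)) with hPdef
  set Q : ℂ → ℂ :=
    fun z => 2 * b * (1 - (α:ℂ)) * ((1 + z * (A 2 + z * Φ3 z)) * (c1 + z * φ2 z)) with hQdef
  clear_value P Q
  have hPQ : ∀ z ∈ ball (0:ℂ) 1, z ≠ 0 → P z = Q z := by
    intro z hz hz0
    have h := hstar z hz hz0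
    have hL : ϱ * ((F z - F ((q:ℂ) * z)) / (1 - (q:ℂ)) - F z) * (1 - w z) = z ^ 2 * P z := by
      simp only [hPdef, hG3def, hT2, hFdec]
      field_simp [hqC]
      ring
    have hR : 2 * b * (1 - (α:ℂ)) * (F z * w z) = z ^ 2 * Q z := by
      simp only [hQdef, hFdec, hwdec]
      ring
    rw [hL, hR] at h
    exact mul_left_cancel₀ (pow_ne_zero 2 hz0) h
  -- differentiability at 0
  have hwdiff : DifferentiableAt ℂ w 0 := (hw 0 h01).differentiableAt
  have hΦ3d : DifferentiableAt ℂ Φ3 0 := hpΦ3.analyticAt.differentiableAt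
  have hφ2d : DifferentiableAt ℂ φ2 0 := hpφ2.analyticAt.differentiableAt
  have hΦ3qd : DifferentiableAt ℂ (fun z => Φ3 ((q:ℂ) * z)) 0 := by
    have h1 : DifferentiableAt ℂ (fun z : ℂ => (q:ℂ) * z) 0 := differentiableAt_id.const_mul _
    have h2 : DifferentiableAt ℂ Φ3 ((fun z : ℂ => (q:ℂ) * z) 0) := by simpa using hΦ3d
    exact DifferentiableAt.comp 0 h2 h1
  have hG3d : DifferentiableAt ℂ G3 0 := by
    rw [hG3def]
    exact ((hΦ3d.sub (hΦ3qd.const_mul _)).div_const _).sub hΦ3d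
  have hu : HasDerivAt (fun z : ℂ => (ϑ2:ℂ) * A 2 + z * G3 z)
      (1 * G3 0 + 0 * deriv G3 0) 0 :=
    ((hasDerivAt_id 0).mul hG3d.hasDerivAt).const_add _
  have hv : HasDerivAt (fun z : ℂ => 1 - w z) (-(deriv w 0)) 0 := by
    simpa using hwdiff.hasDerivAt.const_sub 1
  have hP : HasDerivAt P
      (ϱ * ((1 * G3 0 + 0 * deriv G3 0) * (1 - w 0)
        + ((ϑ2:ℂ) * A 2 + 0 * G3 0) * -(deriv w 0))) 0 := by
    have h1 := (hu.mul hv).const_mul ϱ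
    rw [hPdef]
    exact h1
  have hu2 : HasDerivAt (fun z : ℂ => 1 + z * (A 2 + z * Φ3 z))
      (1 * (A 2 + 0 * Φ3 0) + 0 * (1 * Φ3 0 + 0 * deriv Φ3 0)) 0 :=
    ((hasDerivAt_id 0).mul (((hasDerivAt_id 0).mul hΦ3d.hasDerivAt).const_add (A 2))).const_add 1
  have hv2 : HasDerivAt (fun z : ℂ => c1 + z * φ2 z) (1 * φ2 0 + 0 * deriv φ2 0) 0 :=
    ((hasDerivAt_id 0).mul hφ2d.hasDerivAt).const_add c1
  have hQ : HasDerivAt Q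
      (2 * b * (1 - (α:ℂ)) * ((1 * (A 2 + 0 * Φ3 0) + 0 * (1 * Φ3 0 + 0 * deriv Φ3 0))
          * (c1 + 0 * φ2 0)
        + (1 + 0 * (A 2 + 0 * Φ3 0)) * (1 * φ2 0 + 0 * deriv φ2 0))) 0 := by
    have h1 := (hu2.mul hv2).const_mul (2 * b * (1 - (α:ℂ)))
    rw [hQdef]
    exact h1
  -- P = Q near 0
  have hPQev' : P =ᶠ[nhdsWithin (0:ℂ) {(0:ℂ)}ᶜ] Q := by
    have hball : ball (0:ℂ) 1 ∈ nhdsWithin (0:ℂ) {(0:ℂ)}ᶜ :=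
      mem_nhdsWithin_of_mem_nhds (ball_mem_nhds _ one_pos)
    filter_upwards [hball, self_mem_nhdsWithin] with z hz hz0
    exact hPQ z hz hz0
  have hP0Q0 : P 0 = Q 0 := by
    have h1 : Filter.Tendsto P (nhdsWithin (0:ℂ) {(0:ℂ)}ᶜ) (nhds (P 0)) :=
      hP.differentiableAt.continuousAt.continuousWithinAt
    have h2 : Filter.Tendsto Q (nhdsWithin (0:ℂ) {(0:ℂ)}ᶜ) (nhds (Q 0)) :=
      hQ.differentiableAt.continuousAt.continuousWithinAt
    exact tendsto_nhds_unique (h1.congr' hPQev') h2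
  have hPQev : P =ᶠ[nhds (0:ℂ)] Q := by
    filter_upwards [ball_mem_nhds (0:ℂ) one_pos] with z hz
    rcases eq_or_ne z 0 with rfl | hz0
    · exact hP0Q0
    · exact hPQ z hz hz0
  -- the two coefficient equations
  have hE2 : ϱ * ((ϑ2:ℂ) * A 2) = 2 * b * (1 - (α:ℂ)) * c1 := by
    have h0 := hP0Q0
    rw [hPdef, hQdef] at h0
    simp only [hw0, zero_mul, mul_zero, add_zero, sub_zero, mul_one, one_mul, zero_add] at h0
    linear_combination h0
  have hE3 : ϱ * ((ϑ3:ℂ) * A 3 - (ϑ2:ℂ) * A 2 * c1) = 2 * b * (1 - (α:ℂ)) * (A 2 * c1 + c2) := by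
    have h3 : deriv P 0 = deriv Q 0 := hPQev.deriv_eq
    rw [hP.deriv, hQ.deriv] at h3
    rw [hG30, ← hc1deriv, ← hc2def] at h3
    rw [hw0] at h3
    linear_combination h3
  -- Schwarz coefficient bounds
  obtain ⟨hb1, hb2⟩ := schwarz_two' w hw.differentiableOn hw0 hwb
  rw [← hc1deriv] at hb1 hb2
  rw [← hφdef, ← hc2deriv] at hb2
  -- final algebra
  have ha2 : a 2 = -3 * A 2 := by rw [hA2]; ring
  have ha3 : a 3 = 10 * A 3 := by rw [hA3]; ring
  set s : ℂ := 1 + b * (1 - (α:ℂ)) * (10 * (ϑ2:ℂ) - 9 * μ * (ϑ3:ℂ)) / (5 * ϱ * (ϑ2:ℂ) ^ 2)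
    with hsdef
  set K : ℂ := 20 * b * (1 - (α:ℂ)) / (ϱ * (ϑ3:ℂ)) with hKdef
  clear_value s K
  have hkey : a 3 - μ * (a 2) ^ 2 = K * (c2 + s * c1 ^ 2) := by
    rw [hsdef, hKdef, ha2, ha3]
    exact fekete_algebra ϱ ((ϑ2:ℝ):ℂ) ((ϑ3:ℝ):ℂ) b (1 - (α:ℂ)) c1 c2 μ (A 2) (A 3)
      hϱne hT2ne hT3ne hE2 hE3
  rw [hkey, norm_mul]
  have habsK : ‖K‖ = 20 * ‖b‖ * (1 - α) / (‖ϱ‖ * ϑ3) := by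
    rw [hKdef, norm_div, norm_mul, norm_mul, norm_mul]
    have h1 : ‖1 - (α:ℂ)‖ = 1 - α := by
      rw [show (1 - (α:ℂ)) = (((1 - α : ℝ)):ℂ) by push_cast; ring, Complex.norm_real, Real.norm_eq_abs,
        abs_of_nonneg (by linarith)]
    have h2 : ‖((ϑ3:ℝ):ℂ)‖ = ϑ3 := by
      rw [Complex.norm_real, Real.norm_eq_abs, abs_of_nonneg hϑ3pos.le]
    rw [h1, h2]
    norm_num
  rw [habsK]
  have hbound : ‖c2 + s * c1 ^ 2‖ ≤ max 1 (‖s‖) := by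
    calc ‖c2 + s * c1 ^ 2‖
        ≤ ‖c2‖ + ‖s * c1 ^ 2‖ := norm_add_le _ _
      _ = ‖c2‖ + ‖s‖ * ‖c1‖ ^ 2 := by
          rw [norm_mul, norm_pow]
      _ ≤ max 1 (‖s‖) :=
          fekete_maxbound (‖c1‖) (‖s‖) (‖c2‖)
            (norm_nonneg c1) hb1 (norm_nonneg s) hb2
  have hKnonneg : (0:ℝ) ≤ 20 * ‖b‖ * (1 - α) / (‖ϱ‖ * ϑ3) := by
    apply div_nonneg
    · apply mul_nonneg (mul_nonneg (by norm_num) (norm_nonneg b))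
      linarith
    · exact mul_nonneg (norm_nonneg ϱ) hϑ3pos.le
  exact mul_le_mul_of_nonneg_left hbound hKnonneg
end

section
/- Under the stated spirallike-convex subordination hypothesis, the Taylor coefficients of f satisfy a₂ = −3·b·p₁·w₁/(ϱ·[2]_q) and a₃ = (5·b/(ϱ·[3]_q))·( p₁·w₂ + p₂·w₁² + b·p₁²·w₁²/ϱ ). -/
open Filter

lemma aux_series (c : ℕ → ℂ) (g : ℂ → ℂ)
    (h : ∀ z ∈ Metric.ball (0:ℂ) 1, HasSum (fun n => c n * z ^ n) (g z)) :
    HasFPowerSeriesOnBall g (FormalMultilinearSeries.ofScalars ℂ c) 0 1 where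
  r_le := by
    apply ENNReal.le_of_forall_nnreal_lt
    intro r hr
    have hr1 : (r : ℝ) < 1 := by exact_mod_cast hr
    have hz : ((r : ℝ) : ℂ) ∈ Metric.ball (0:ℂ) 1 := by
      rw [Metric.mem_ball, Complex.dist_eq, sub_zero]
      simpa [abs_of_nonneg r.coe_nonneg] using hr1
    apply FormalMultilinearSeries.le_radius_of_tendsto _ (l := 0)
    have h0 := ((h _ hz).summable.tendsto_atTop_zero).norm
    rw [norm_zero] at h0
    refine h0.congr fun n => ?_
    rw [FormalMultilinearSeries.ofScalars_norm, norm_mul, norm_pow, Complex.norm_real,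
      Real.norm_eq_abs, abs_of_nonneg r.coe_nonneg]
  r_pos := one_pos
  hasSum := by
    intro y hy
    have hy' : y ∈ Metric.ball (0:ℂ) 1 := by
      have he : Metric.eball (0:ℂ) (1:ENNReal) = Metric.ball (0:ℂ) 1 := by
        rw [← Metric.emetric_ball]; norm_num
      rwa [he] at hy
    simp only [FormalMultilinearSeries.ofScalars_apply_eq, smul_eq_mul, zero_add]
    exact h y hy'

lemma aux_coeff (c : ℕ → ℂ) (g : ℂ → ℂ)
    (h : HasFPowerSeriesOnBall g (FormalMultilinearSeries.ofScalars ℂ c) 0 1) (n : ℕ) :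
    iteratedDeriv n g 0 = (n.factorial : ℂ) * c n := by
  have h1 := h.factorial_smul (1 : ℂ) n
  rw [FormalMultilinearSeries.ofScalars_apply_eq] at h1
  rw [iteratedDeriv_eq_iteratedFDeriv, ← h1]
  simp [smul_eq_mul, mul_comm]

lemma DqF_hasSum (K : ℕ → ℂ) (hK : K 1 = 1) (q : ℝ) (hq0 : 0 < q) (hq1 : q < 1)
    (F DqF : ℂ → ℂ)
    (hF : ∀ z ∈ Metric.ball (0 : ℂ) 1, HasSum (fun n : ℕ => K n * z ^ n) (F z))
    (hDq0 : DqF 0 = 1)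
    (hDqF : ∀ z : ℂ, z ≠ 0 → DqF z = (F z - F ((q : ℂ) * z)) / ((1 - (q : ℂ)) * z)) :
    ∀ z ∈ Metric.ball (0:ℂ) 1,
      HasSum (fun n : ℕ => (K (n+1) * ((1 - (q:ℂ)^(n+1)) / (1 - (q:ℂ)))) * z ^ n) (DqF z) := by
  have h1q : (1:ℂ) - (q:ℂ) ≠ 0 := by
    rw [sub_ne_zero]
    intro h
    have : (q:ℝ) = 1 := by exact_mod_cast h.symm
    linarith
  intro z hz
  by_cases hz0 : z = 0
  · subst hz0
    rw [hDq0]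
    have key : ∀ n : ℕ, n ≠ 0 →
        (K (n+1) * ((1 - (q:ℂ)^(n+1)) / (1 - (q:ℂ)))) * (0:ℂ) ^ n = 0 := by
      intro n hn
      rw [zero_pow hn, mul_zero]
    have h := hasSum_single
      (f := fun n : ℕ => (K (n+1) * ((1 - (q:ℂ)^(n+1)) / (1 - (q:ℂ)))) * (0:ℂ) ^ n) 0 key
    simp only [pow_zero, mul_one, pow_one, hK, one_mul] at h
    rwa [pow_one, div_self h1q] at h
  · have hz2 : (q:ℂ) * z ∈ Metric.ball (0:ℂ) 1 := by
      rw [Metric.mem_ball, Complex.dist_eq, sub_zero] at hz ⊢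
      rw [norm_mul, Complex.norm_real, Real.norm_eq_abs, abs_of_pos hq0]
      nlinarith [norm_nonneg z]
    have h1 := hF z hz
    have h2 := hF _ hz2
    have h3 := (h1.sub h2).div_const ((1 - (q:ℂ)) * z)
    have h4 := (hasSum_nat_add_iff'
      (f := fun n => (K n * z ^ n - K n * ((q:ℂ) * z) ^ n) / ((1 - (q:ℂ)) * z)) 1).mpr h3
    have e0 : ∑ i ∈ Finset.range 1,
        (K i * z ^ i - K i * ((q:ℂ) * z) ^ i) / ((1 - (q:ℂ)) * z) = 0 := by
      simp
    rw [e0, sub_zero] at h4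
    have efun : (fun n : ℕ => (K (n+1) * z ^ (n+1) - K (n+1) * ((q:ℂ) * z) ^ (n+1))
        / ((1 - (q:ℂ)) * z)) = fun n : ℕ =>
        (K (n+1) * ((1 - (q:ℂ)^(n+1)) / (1 - (q:ℂ)))) * z ^ n := by
      funext n
      rw [mul_pow]
      field_simp
      ring
    rw [efun] at h4
    rw [hDqF z hz0]
    exact h4



theorem convex_coeff_formulas
    (q : ℝ) (hq0 : 0 < q) (hq1 : q < 1)
    (a : ℕ → ℂ) (ha0 : a 0 = 0) (ha1 : a 1 = 1)
    (f F DqF : ℂ → ℂ)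
    (hf : ∀ z ∈ Metric.ball (0 : ℂ) 1, HasSum (fun n : ℕ => a n * z ^ n) (f z))
    (hF : ∀ z ∈ Metric.ball (0 : ℂ) 1,
      HasSum (fun n : ℕ =>
        (-1 : ℂ) ^ (n - 1) * a n / (((2 * n - 1 : ℕ) : ℂ) * ((n - 1).factorial : ℂ)) * z ^ n)
        (F z))
    (hDq0 : DqF 0 = 1)
    (hDqF : ∀ z : ℂ, z ≠ 0 → DqF z = (F z - F ((q : ℂ) * z)) / ((1 - (q : ℂ)) * z))
    (Q2 Q3 : ℝ)
    (hQ2 : Q2 = (1 - q ^ 2) / (1 - q))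
    (hQ3 : Q3 = (1 - q ^ 3) / (1 - q))
    (w : ℂ → ℂ)
    (hw : AnalyticOnNhd ℂ w (Metric.ball (0 : ℂ) 1))
    (hw0 : w 0 = 0)
    (hwb : ∀ z ∈ Metric.ball (0 : ℂ) 1, ‖w z‖ < 1)
    (w1 w2 : ℂ) (hw1 : w1 = deriv w 0) (hw2 : w2 = iteratedDeriv 2 w 0 / 2)
    (β : ℝ) (hβ1 : -(Real.pi / 2) < β) (hβ2 : β < Real.pi / 2)
    (ϱ : ℂ) (hϱ : ϱ = 1 + Complex.I * (Real.tan β : ℂ))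
    (b : ℂ) (hb : b ≠ 0)
    (p : ℂ → ℂ)
    (hp : AnalyticOnNhd ℂ p (Metric.ball (0 : ℂ) 1))
    (hp0 : p 0 = 1)
    (p1 p2 : ℂ) (hp1 : p1 = deriv p 0) (hp2 : p2 = iteratedDeriv 2 p 0 / 2)
    (hDne : ∀ z ∈ Metric.ball (0 : ℂ) 1, DqF z ≠ 0)
    (hsub : ∀ z ∈ Metric.ball (0 : ℂ) 1,
      1 + (1 / b) * (ϱ * (deriv (fun u => u * DqF u) z / DqF z) - ϱ) = p (w z))
    :
    a 2 = -(3 * b * p1 * w1) / (ϱ * (Q2 : ℂ)) ∧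
    a 3 = (5 * b / (ϱ * (Q3 : ℂ))) *
      (p1 * w2 + p2 * w1 ^ 2 + b * p1 ^ 2 * w1 ^ 2 / ϱ) := by
  have hball : IsOpen (Metric.ball (0:ℂ) 1) := Metric.isOpen_ball
  have h0 : (0:ℂ) ∈ Metric.ball (0:ℂ) 1 := Metric.mem_ball_self one_pos
  have hnh : Metric.ball (0:ℂ) 1 ∈ nhds (0:ℂ) := hball.mem_nhds h0
  -- power series of DqF
  have hDsum := DqF_hasSum
    (fun n => (-1 : ℂ) ^ (n - 1) * a n / (((2 * n - 1 : ℕ) : ℂ) * ((n - 1).factorial : ℂ)))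
    (by norm_num [ha1]) q hq0 hq1 F DqF hF hDq0 hDqF
  have hDsum' : ∀ z ∈ Metric.ball (0:ℂ) 1, HasSum (fun n : ℕ =>
      ((-1 : ℂ) ^ n * a (n+1) / (((2 * (n+1) - 1 : ℕ) : ℂ) * (n.factorial : ℂ))
        * ((1 - (q:ℂ)^(n+1)) / (1 - (q:ℂ)))) * z ^ n) (DqF z) := by
    intro z hz
    have h := hDsum z hz
    simp only [Nat.add_sub_cancel] at h
    exact h
  have hser := aux_series
    (fun n => (-1 : ℂ) ^ n * a (n+1) / (((2 * (n+1) - 1 : ℕ) : ℂ) * (n.factorial : ℂ))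
        * ((1 - (q:ℂ)^(n+1)) / (1 - (q:ℂ)))) DqF hDsum'
  have hEball : Metric.eball (0:ℂ) (1:ENNReal) = Metric.ball (0:ℂ) 1 := by
    rw [← Metric.emetric_ball]; norm_num
  have hDan : AnalyticOnNhd ℂ DqF (Metric.ball (0:ℂ) 1) := by
    rw [← hEball]; exact hser.analyticOnNhd
  have hD'an := hDan.deriv
  have hD''an := hD'an.deriv
  -- cast facts
  have hQ2c : ((Q2:ℝ):ℂ) = (1 - (q:ℂ)^2)/(1 - (q:ℂ)) := by
    rw [hQ2]; push_cast; ring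
  have hQ3c : ((Q3:ℝ):ℂ) = (1 - (q:ℂ)^3)/(1 - (q:ℂ)) := by
    rw [hQ3]; push_cast; ring
  -- derivative values of DqF at 0
  have hd1 : deriv DqF 0 = -(a 2)/3 * ((Q2:ℝ):ℂ) := by
    have h := aux_coeff _ DqF hser 1
    rw [iteratedDeriv_one] at h
    rw [h, hQ2c]
    norm_num [Nat.factorial]
  have hd2 : deriv (deriv DqF) 0 = 2 * (a 3 / 10 * ((Q3:ℝ):ℂ)) := by
    have h := aux_coeff _ DqF hser 2
    rw [show (2:ℕ) = 1 + 1 from rfl, iteratedDeriv_succ, iteratedDeriv_one] at h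
    rw [h, hQ3c]
    norm_num [Nat.factorial]
  -- w maps ball to ball
  have hwmem : ∀ z ∈ Metric.ball (0:ℂ) 1, w z ∈ Metric.ball (0:ℂ) 1 := by
    intro z hz
    rw [Metric.mem_ball, Complex.dist_eq, sub_zero]
    exact hwb z hz
  have hw0mem := hwmem 0 h0
  have hPan : AnalyticOnNhd ℂ (fun z => p (w z)) (Metric.ball (0:ℂ) 1) := by
    intro z hz
    exact (hp (w z) (hwmem z hz)).comp (hw z hz)
  have hdPan := hPan.deriv
  -- A = B on ball
  have hG : ∀ z ∈ Metric.ball (0:ℂ) 1,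
      deriv (fun u => u * DqF u) z = DqF z + z * deriv DqF z := by
    intro z hz
    have h := ((hasDerivAt_id' z).mul ((hDan z hz).differentiableAt.hasDerivAt)).deriv
    rw [show (fun u => u * DqF u) = (fun x => x) * DqF from rfl, h]; ring
  have hAB : ∀ z ∈ Metric.ball (0:ℂ) 1,
      (fun z => ϱ * (DqF z + z * deriv DqF z)) z
        = (fun z => (b * (p (w z) - 1) + ϱ) * DqF z) z := by
    intro z hz
    have he := hsub z hz
    rw [hG z hz] at he
    have hD := hDne z hz
    simp only
    rw [← he]
    field_simp
    ring
  have hABev : (fun z => ϱ * (DqF z + z * deriv DqF z))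
      =ᶠ[nhds (0:ℂ)] (fun z => (b * (p (w z) - 1) + ϱ) * DqF z) :=
    Filter.eventuallyEq_of_mem hnh hAB
  have eq1 : deriv (fun z => ϱ * (DqF z + z * deriv DqF z)) 0
      = deriv (fun z => (b * (p (w z) - 1) + ϱ) * DqF z) 0 := hABev.deriv.eq_of_nhds
  have eq2 : deriv (deriv (fun z => ϱ * (DqF z + z * deriv DqF z))) 0
      = deriv (deriv (fun z => (b * (p (w z) - 1) + ϱ) * DqF z)) 0 :=
    hABev.deriv.deriv.eq_of_nhds
  -- derivatives of the left side
  have hAder : ∀ z ∈ Metric.ball (0:ℂ) 1,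
      deriv (fun z => ϱ * (DqF z + z * deriv DqF z)) z
        = ϱ * (deriv DqF z + (1 * deriv DqF z + z * deriv (deriv DqF) z)) := by
    intro z hz
    exact (((hDan z hz).differentiableAt.hasDerivAt.add
      ((hasDerivAt_id' z).mul ((hD'an z hz).differentiableAt.hasDerivAt))).const_mul ϱ).deriv
  have hA1 : deriv (fun z => ϱ * (DqF z + z * deriv DqF z)) 0
      = 2 * (ϱ * (-(a 2)/3 * ((Q2:ℝ):ℂ))) := by
    rw [hAder 0 h0, hd1]; ring
  have hAev2 : deriv (fun z => ϱ * (DqF z + z * deriv DqF z)) =ᶠ[nhds (0:ℂ)]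
      (fun z => ϱ * (deriv DqF z + (1 * deriv DqF z + z * deriv (deriv DqF) z))) :=
    Filter.eventuallyEq_of_mem hnh hAder
  have hA2 : deriv (deriv (fun z => ϱ * (DqF z + z * deriv DqF z))) 0
      = 6 * (ϱ * (a 3 / 10 * ((Q3:ℝ):ℂ))) := by
    rw [hAev2.deriv_eq]
    have h : deriv (fun z => ϱ * (deriv DqF z + (1 * deriv DqF z + z * deriv (deriv DqF) z))) 0 =
        ϱ * (deriv (deriv DqF) 0 + (1 * deriv (deriv DqF) 0 + (1 * deriv (deriv DqF) 0 + 0 * deriv (deriv (deriv DqF)) 0))) :=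
      (((hD'an 0 h0).differentiableAt.hasDerivAt.add
      (((hD'an 0 h0).differentiableAt.hasDerivAt.const_mul 1).add
        ((hasDerivAt_id' 0).mul ((hD''an 0 h0).differentiableAt.hasDerivAt)))).const_mul ϱ).deriv
    rw [h, hd2]; ring
  -- derivatives of the right side
  have hPd : ∀ z ∈ Metric.ball (0:ℂ) 1,
      deriv (fun z => p (w z)) z = deriv p (w z) * deriv w z := by
    intro z hz
    exact (HasDerivAt.comp z ((hp (w z) (hwmem z hz)).differentiableAt.hasDerivAt)
      ((hw z hz).differentiableAt.hasDerivAt)).deriv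
  have hP0 : p (w 0) = 1 := by rw [hw0, hp0]
  have hPd0 : deriv (fun z => p (w z)) 0 = p1 * w1 := by
    rw [hPd 0 h0, hw0, ← hp1, ← hw1]
  have hBder : ∀ z ∈ Metric.ball (0:ℂ) 1,
      deriv (fun z => (b * (p (w z) - 1) + ϱ) * DqF z) z
        = b * deriv (fun z => p (w z)) z * DqF z
          + (b * (p (w z) - 1) + ϱ) * deriv DqF z := by
    intro z hz
    exact (((((hPan z hz).differentiableAt.hasDerivAt.sub_const 1).const_mul b).add_const ϱ).mul
      ((hDan z hz).differentiableAt.hasDerivAt)).deriv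
  have hB1 : deriv (fun z => (b * (p (w z) - 1) + ϱ) * DqF z) 0
      = b * (p1 * w1) + ϱ * (-(a 2)/3 * ((Q2:ℝ):ℂ)) := by
    rw [hBder 0 h0, hPd0, hDq0, hP0, hd1]; ring
  have hdP2 : deriv (deriv (fun z => p (w z))) 0 = 2 * (p2 * w1 ^ 2 + p1 * w2) := by
    have hev : deriv (fun z => p (w z)) =ᶠ[nhds (0:ℂ)] (fun z => deriv p (w z) * deriv w z) :=
      Filter.eventuallyEq_of_mem hnh hPd
    rw [hev.deriv_eq]
    have hcomp : HasDerivAt (fun z => deriv p (w z)) (deriv (deriv p) (w 0) * deriv w 0) 0 :=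
      HasDerivAt.comp 0 ((hp.deriv (w 0) hw0mem).differentiableAt.hasDerivAt)
        ((hw 0 h0).differentiableAt.hasDerivAt)
    have hmul : deriv (fun z => deriv p (w z) * deriv w z) 0 =
        deriv (deriv p) (w 0) * deriv w 0 * deriv w 0 + deriv p (w 0) * deriv (deriv w) 0 := (hcomp.mul ((hw.deriv 0 h0).differentiableAt.hasDerivAt)).deriv
    rw [hmul, hw0]
    have e1 : deriv (deriv p) 0 = 2 * p2 := by
      have : iteratedDeriv 2 p 0 = deriv (deriv p) 0 := by
        rw [show (2:ℕ) = 1 + 1 from rfl, iteratedDeriv_succ, iteratedDeriv_one]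
      rw [← this, hp2]; ring
    have e2 : deriv (deriv w) 0 = 2 * w2 := by
      have : iteratedDeriv 2 w 0 = deriv (deriv w) 0 := by
        rw [show (2:ℕ) = 1 + 1 from rfl, iteratedDeriv_succ, iteratedDeriv_one]
      rw [← this, hw2]; ring
    rw [e1, e2, ← hp1, ← hw1]; ring
  have hBev2 : deriv (fun z => (b * (p (w z) - 1) + ϱ) * DqF z) =ᶠ[nhds (0:ℂ)]
      (fun z => b * deriv (fun z => p (w z)) z * DqF z
        + (b * (p (w z) - 1) + ϱ) * deriv DqF z) :=
    Filter.eventuallyEq_of_mem hnh hBder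
  have hB2 : deriv (deriv (fun z => (b * (p (w z) - 1) + ϱ) * DqF z)) 0
      = b * (2 * (p2 * w1 ^ 2 + p1 * w2))
        + 2 * (b * (p1 * w1) * (-(a 2)/3 * ((Q2:ℝ):ℂ)))
        + 2 * (ϱ * (a 3 / 10 * ((Q3:ℝ):ℂ))) := by
    rw [hBev2.deriv_eq]
    have t1 := ((hdPan 0 h0).differentiableAt.hasDerivAt.const_mul b).mul
      ((hDan 0 h0).differentiableAt.hasDerivAt)
    have t2 := (((((hPan 0 h0).differentiableAt.hasDerivAt.sub_const 1).const_mul b).add_const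
      ϱ).mul ((hD'an 0 h0).differentiableAt.hasDerivAt))
    rw [show (fun z => b * deriv (fun z => p (w z)) z * DqF z + (b * (p (w z) - 1) + ϱ) * deriv DqF z) = (fun y => b * deriv (fun z => p (w z)) y) * DqF + (fun x => b * (p (w x) - 1) + ϱ) * deriv DqF from rfl,
      (t1.add t2).deriv, hdP2, hPd0, hDq0, hP0, hd1, hd2]; ring
  -- nonvanishing facts
  have hQ2pos : (0:ℝ) < Q2 := by
    rw [hQ2]; apply div_pos <;> nlinarith
  have hQ3pos : (0:ℝ) < Q3 := by
    rw [hQ3]; apply div_pos <;> nlinarith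
  have hQ2ne : ((Q2:ℝ):ℂ) ≠ 0 := Complex.ofReal_ne_zero.mpr hQ2pos.ne'
  have hQ3ne : ((Q3:ℝ):ℂ) ≠ 0 := Complex.ofReal_ne_zero.mpr hQ3pos.ne'
  have hϱre : ϱ.re = 1 := by rw [hϱ]; simp
  have hϱ0 : ϱ ≠ 0 := by
    intro h
    rw [h] at hϱre
    simp at hϱre
  -- the two key equations
  have key1 : ϱ * (-(a 2)/3 * ((Q2:ℝ):ℂ)) = b * (p1 * w1) := by
    rw [hA1, hB1] at eq1
    linear_combination eq1
  have key2 : 6 * (ϱ * (a 3 / 10 * ((Q3:ℝ):ℂ)))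
      = b * (2 * (p2 * w1 ^ 2 + p1 * w2))
        + 2 * (b * (p1 * w1) * (-(a 2)/3 * ((Q2:ℝ):ℂ)))
        + 2 * (ϱ * (a 3 / 10 * ((Q3:ℝ):ℂ))) := by
    rw [hA2, hB2] at eq2
    exact eq2
  constructor
  · rw [eq_div_iff (mul_ne_zero hϱ0 hQ2ne)]
    linear_combination (-3 : ℂ) * key1
  · have goal3 : a 3 * (ϱ * ϱ * ((Q3:ℝ):ℂ))
        = 5 * b * (ϱ * (p1 * w2 + p2 * w1 ^ 2) + b * p1 ^ 2 * w1 ^ 2) := by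
      have k2 := key2
      -- substitute b*(p1*w1) for ϱ * c1 using key1
      linear_combination (5 / 2 : ℂ) * ϱ * k2 + 5 * b * p1 * w1 * key1
    have hrhs : (5 * b / (ϱ * ((Q3:ℝ):ℂ))) *
        (p1 * w2 + p2 * w1 ^ 2 + b * p1 ^ 2 * w1 ^ 2 / ϱ)
        = 5 * b * (ϱ * (p1 * w2 + p2 * w1 ^ 2) + b * p1 ^ 2 * w1 ^ 2)
          / (ϱ * ϱ * ((Q3:ℝ):ℂ)) := by
      field_simp
    rw [hrhs, eq_div_iff (by exact mul_ne_zero (mul_ne_zero hϱ0 hϱ0) hQ3ne)]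
    linear_combination goal3
end
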